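/- arXiv:2105.06303 — 5 statements merged into one kernel-verified Lean document; each statement's English description precedes it below -/
import Mathlib

section
/- Let $a,b$ be positive integers, $m \geq 1$ an integer, $\kappa_1,\kappa_2 \geq 0$ real numbers, and $D>0$ with $\sqrt{\kappa_2}\,D/2 < \pi/2$ and $2\sqrt{\kappa_1}\,D/2 < \pi/2$. Suppose $\lambda \in \mathbb{R}$ and $\varphi$ is a twice continuously differentiable real-valued function on $[-D/2,D/2]$ satisfying the ODE $\varphi''(t)-\big(2a(m-1)\sqrt{\kappa_2}\tan(\sqrt{\kappa_2}\,t)+2b\sqrt{\kappa_1}\tan(2\sqrt{\kappa_1}\,t)\big)\varphi'(t)+\lambda\varphi(t)=0$ for all $t\in[-D/2,D/2]$, with Neumann boundary conditions $\varphi'(-D/2)=\varphi'(D/2)=0$, and such that $\varphi' \geq 0$ on $[-D/2,D/2]$ and $\varphi$ is not constant. Then for every $s\in(0,1)$, $\lambda \geq 4s(1-s)\frac{\pi^2}{D^2} + s\big(2a(m-1)\kappa_2 + 4b\kappa_1\big)$. -/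
set_option maxHeartbeats 1000000


open Real Set Filter Topology


lemma cospow_deriv (c p t : ℝ) (h : 0 < Real.cos (c*t)) :
    HasDerivAt (fun u => Real.cos (c*u) ^ p) (-(p * c * Real.tan (c*t)) * Real.cos (c*t) ^ p) t := by
  have h1 : HasDerivAt (fun u : ℝ => Real.cos (c*u)) (-Real.sin (c*t) * c) t := by
    simpa [Function.comp_def] using (Real.hasDerivAt_cos (c*t)).comp t ((hasDerivAt_id t).const_mul c)
  have h2 := h1.rpow_const (p := p) (Or.inl (ne_of_gt h))
  have he : -(p * c * Real.tan (c*t)) * Real.cos (c*t) ^ p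
      = -Real.sin (c*t) * c * p * Real.cos (c*t) ^ (p - 1) := by
    rw [Real.rpow_sub_one (ne_of_gt h), Real.tan_eq_sin_div_cos]
    ring
  rw [he]; exact h2

lemma tanmul_deriv (c t : ℝ) (h : 0 < Real.cos (c*t)) :
    HasDerivAt (fun u => Real.tan (c*u)) (c * (1 + Real.tan (c*t)^2)) t := by
  have h1 := (Real.hasDerivAt_tan (ne_of_gt h)).comp t ((hasDerivAt_id t).const_mul c)
  have he : c * (1 + Real.tan (c*t)^2) = 1 / Real.cos (c*t) ^ 2 * (c * 1) := by
    have h3 := Real.inv_one_add_tan_sq (ne_of_gt h)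
    have h4 : Real.cos (c*t) ^ 2 ≠ 0 := pow_ne_zero _ (ne_of_gt h)
    field_simp [← h3]
    have h5 : Real.tan (c*t)^2 * Real.cos (c*t)^2 = Real.sin (c*t)^2 := by
      rw [Real.tan_eq_sin_div_cos, div_pow, div_mul_cancel₀ _ h4]
    linear_combination c * h5 + c * Real.sin_sq_add_cos_sq (c*t)
  rw [he]; exact h1

lemma gen (c₁ c₂ r₁ r₂ : ℝ) (hc₁ : 0 ≤ c₁) (hc₂ : 0 ≤ c₂) (hr₁ : 0 ≤ r₁) (hr₂ : 0 ≤ r₂)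
    (L : ℝ) (hL : 0 < L) (hL₂ : c₂ * L < π/2) (hL₁ : c₁ * L < π/2)
    (lam : ℝ) (φ φ' φ'' : ℝ → ℝ)
    (hd1 : ∀ t ∈ Icc (-L) L, HasDerivAt φ (φ' t) t)
    (hd2 : ∀ t ∈ Icc (-L) L, HasDerivAt φ' (φ'' t) t)
    (hc2 : ContinuousOn φ'' (Icc (-L) L))
    (hODE : ∀ t ∈ Icc (-L) L,
      φ'' t - (r₂ * c₂ * Real.tan (c₂*t) + r₁ * c₁ * Real.tan (c₁*t)) * φ' t + lam * φ t = 0)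
    (hNeu₁ : φ' (-L) = 0) (hNeu₂ : φ' L = 0)
    (hmono : ∀ t ∈ Icc (-L) L, 0 ≤ φ' t)
    (hnonconst : ¬ ∀ t ∈ Icc (-L) L, φ t = φ (-L))
    (s : ℝ) (hs0 : 0 < s) (hs1 : s < 1) :
    s * (1-s) * (π/L)^2 + (1-s) * (r₂*c₂^2 + r₁*c₁^2) ≤ lam := by
  by_contra hcon
  push_neg at hcon
  have hLL : -L < L := by linarith
  have habs : ∀ t ∈ Icc (-L) L, |t| ≤ L := fun t ht => abs_le.mpr ⟨ht.1, ht.2⟩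
  -- positivity of cosines
  have hcosgen : ∀ (c : ℝ), 0 ≤ c → c * L < π/2 → ∀ t ∈ Icc (-L) L, 0 < Real.cos (c*t) := by
    intro c hc hcL t ht
    apply Real.cos_pos_of_mem_Ioo
    constructor
    · have : c * t ≤ c * L := by nlinarith [ht.2, habs t ht, abs_le.mp (habs t ht)]
      have h2 : -(c*L) ≤ c * t := by nlinarith [(abs_le.mp (habs t ht)).1]
      linarith
    · calc c * t ≤ c * L := by nlinarith [(abs_le.mp (habs t ht)).2]
        _ < π/2 := hcL
  have hcos₂ : ∀ t ∈ Icc (-L) L, 0 < Real.cos (c₂*t) := hcosgen c₂ hc₂ hL₂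
  have hcos₁ : ∀ t ∈ Icc (-L) L, 0 < Real.cos (c₁*t) := hcosgen c₁ hc₁ hL₁
  set β : ℝ := π/(2*L) with hβdef
  clear_value β
  have hβpos : 0 < β := by rw [hβdef]; positivity
  have hβL : β * L = π/2 := by rw [hβdef]; field_simp
  have hcosβ : ∀ t ∈ Ioo (-L) L, 0 < Real.cos (β*t) := by
    intro t ht
    apply Real.cos_pos_of_mem_Ioo
    have h1 : |t| < L := abs_lt.mpr ⟨ht.1, ht.2⟩
    have h2 : |β * t| < π/2 := by
      rw [abs_mul, abs_of_pos hβpos, ← hβL]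
      exact mul_lt_mul_of_pos_left h1 hβpos
    exact abs_lt.mp h2

  -- drift and its derivative
  set T : ℝ → ℝ := fun t => r₂ * c₂ * Real.tan (c₂*t) + r₁ * c₁ * Real.tan (c₁*t) with hTdef
  clear_value T
  set T₁ : ℝ → ℝ := fun t => r₂*c₂^2*(1 + Real.tan (c₂*t)^2) + r₁*c₁^2*(1 + Real.tan (c₁*t)^2)
    with hT₁def
  clear_value T₁
  have hTd : ∀ t ∈ Icc (-L) L, HasDerivAt T (T₁ t) t := by
    intro t ht
    have h2 := (tanmul_deriv c₂ t (hcos₂ t ht)).const_mul (r₂ * c₂)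
    have h1 := (tanmul_deriv c₁ t (hcos₁ t ht)).const_mul (r₁ * c₁)
    have := h2.add h1
    rw [hTdef, hT₁def]
    refine this.congr_deriv ?_
    ring
  set K : ℝ := r₂*c₂^2 + r₁*c₁^2 with hKdef
  clear_value K
  have hT₁K : ∀ t ∈ Icc (-L) L, K ≤ T₁ t := by
    intro t ht
    simp only [hKdef, hT₁def]
    nlinarith [sq_nonneg (Real.tan (c₂*t)), sq_nonneg (Real.tan (c₁*t)), sq_nonneg c₂, sq_nonneg c₁,
      mul_nonneg hr₂ (sq_nonneg c₂), mul_nonneg hr₁ (sq_nonneg c₁),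
      mul_nonneg (mul_nonneg hr₂ (sq_nonneg c₂)) (sq_nonneg (Real.tan (c₂*t))),
      mul_nonneg (mul_nonneg hr₁ (sq_nonneg c₁)) (sq_nonneg (Real.tan (c₁*t)))]
  -- the assumption restated
  have hlam : lam < 4*s*(1-s)*β^2 + (1-s)*K := by
    have hβ2 : (π/L)^2 = 4*β^2 := by rw [hβdef]; field_simp; ring
    have h4 : s*(1-s)*(π/L)^2 = 4*s*(1-s)*β^2 := by rw [hβ2]; ring
    linarith [hcon, h4]
  -- weights
  set p₀ : ℝ := 4*s*(1-s) with hp₀def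
  clear_value p₀
  have hp₀pos : 0 < p₀ := by rw [hp₀def]; nlinarith
  have hp₀le : p₀ ≤ 1 := by rw [hp₀def]; nlinarith [sq_nonneg (2*s-1)]
  set γ : ℝ := p₀ * β with hγdef
  clear_value γ
  have hγpos : 0 < γ := by rw [hγdef]; exact mul_pos hp₀pos hβpos
  set A : ℝ → ℝ := fun t => Real.cos (c₂*t) ^ (-(s*r₂)) * Real.cos (c₁*t) ^ (-(s*r₁)) with hAdef
  clear_value A
  have hApos : ∀ t ∈ Icc (-L) L, 0 < A t := by
    intro t ht
    rw [hAdef]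
    exact mul_pos (Real.rpow_pos_of_pos (hcos₂ t ht) _) (Real.rpow_pos_of_pos (hcos₁ t ht) _)
  set w : ℝ → ℝ := fun t => A t * Real.cos (β*t) ^ p₀ with hwdef
  clear_value w
  have hwpos : ∀ t ∈ Ioo (-L) L, 0 < w t := by
    intro t ht
    rw [hwdef]
    exact mul_pos (hApos t (Ioo_subset_Icc_self ht)) (Real.rpow_pos_of_pos (hcosβ t ht) _)
  set Q : ℝ → ℝ := fun t => s * T t - γ * Real.tan (β*t) with hQdef
  clear_value Q
  set Q₁ : ℝ → ℝ := fun t => s * T₁ t - γ*β*(1 + Real.tan (β*t)^2) with hQ₁def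
  clear_value Q₁
  have hwd : ∀ t ∈ Ioo (-L) L, HasDerivAt w (Q t * w t) t := by
    intro t ht
    have htI := Ioo_subset_Icc_self ht
    have h2 := cospow_deriv c₂ (-(s*r₂)) t (hcos₂ t htI)
    have h1 := cospow_deriv c₁ (-(s*r₁)) t (hcos₁ t htI)
    have h0 := cospow_deriv β p₀ t (hcosβ t ht)
    have := (h2.mul h1).mul h0
    rw [hwdef, hAdef, hQdef, hTdef]
    refine this.congr_deriv ?_
    simp only [hγdef, Pi.mul_apply]
    ring
  have hQd : ∀ t ∈ Ioo (-L) L, HasDerivAt Q (Q₁ t) t := by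
    intro t ht
    have h1 := (hTd t (Ioo_subset_Icc_self ht)).const_mul s
    have h2 := (tanmul_deriv β t (hcosβ t ht)).const_mul γ
    have := h1.sub h2
    rw [hQdef, hQ₁def]
    refine this.congr_deriv ?_
    ring
  -- the key pointwise inequality
  set E : ℝ → ℝ := fun t => Q₁ t + Q t^2 - T t * Q t - T₁ t + lam with hEdef
  clear_value E
  have hE : ∀ t ∈ Ioo (-L) L, E t < 0 := by
    intro t ht
    have htI := Ioo_subset_Icc_self ht
    have hid : E t = -(1-s)*(T₁ t - K) - s*(1-s)*(T t - 2*(1-2*s)*β*Real.tan (β*t))^2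
        + (lam - (p₀*β^2 + (1-s)*K)) := by
      rw [hEdef]
      simp only [hQ₁def, hQdef, hγdef, hp₀def, hKdef]
      ring
    have h1 : 0 ≤ (1-s)*(T₁ t - K) := by
      have := hT₁K t htI
      nlinarith
    have h2 : 0 ≤ s*(1-s)*(T t - 2*(1-2*s)*β*Real.tan (β*t))^2 :=
      mul_nonneg (mul_nonneg hs0.le (by linarith)) (sq_nonneg _)
    rw [hid]
    linarith

  -- integrating factor
  set g : ℝ → ℝ := fun t => Real.cos (c₂*t) ^ r₂ * Real.cos (c₁*t) ^ r₁ with hgdef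
  have hgpos : ∀ t ∈ Icc (-L) L, 0 < g t := by
    intro t ht; rw [hgdef]
    exact mul_pos (Real.rpow_pos_of_pos (hcos₂ t ht) _) (Real.rpow_pos_of_pos (hcos₁ t ht) _)
  have hgd : ∀ t ∈ Icc (-L) L, HasDerivAt g (-(T t) * g t) t := by
    intro t ht
    have h2 := cospow_deriv c₂ r₂ t (hcos₂ t ht)
    have h1 := cospow_deriv c₁ r₁ t (hcos₁ t ht)
    have h := h2.mul h1
    rw [hgdef]; simp only [hTdef]
    refine h.congr_deriv ?_
    ring
  clear_value g
  -- third derivative of φ via the ODE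
  have hv2 : ∀ t ∈ Ioo (-L) L, HasDerivAt φ'' (T₁ t * φ' t + T t * φ'' t - lam * φ' t) t := by
    intro t ht
    have heq : φ'' =ᶠ[𝓝 t] fun x => T x * φ' x - lam * φ x := by
      filter_upwards [Ioo_mem_nhds ht.1 ht.2] with x hx
      have h := hODE x (Ioo_subset_Icc_self hx)
      simp only [hTdef] at h ⊢
      linarith [h]
    have hrhs : HasDerivAt (fun x => T x * φ' x - lam * φ x)
        (T₁ t * φ' t + T t * φ'' t - lam * φ' t) t :=
      ((hTd t (Ioo_subset_Icc_self ht)).mul (hd2 t (Ioo_subset_Icc_self ht))).sub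
        ((hd1 t (Ioo_subset_Icc_self ht)).const_mul lam)
    exact hrhs.congr_of_eventuallyEq heq
  -- derivative of Q * w
  have hw'd : ∀ t ∈ Ioo (-L) L, HasDerivAt (fun u => Q u * w u) ((Q₁ t + Q t^2) * w t) t := by
    intro t ht
    refine ((hQd t ht).mul (hwd t ht)).congr_deriv ?_
    ring
  -- the Wronskian-type quantity
  set Z : ℝ → ℝ := fun t => φ'' t * w t - φ' t * (Q t * w t) with hZdef
  have hZd : ∀ t ∈ Ioo (-L) L, HasDerivAt Z (T t * Z t - φ' t * w t * E t) t := by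
    intro t ht
    have htI := Ioo_subset_Icc_self ht
    have h := ((hv2 t ht).mul (hwd t ht)).sub ((hd2 t htI).mul (hw'd t ht))
    simp only [hZdef, hEdef]
    refine h.congr_deriv ?_
    ring
  clear_value Z
  set Y : ℝ → ℝ := fun t => Z t * g t with hYdef
  have hYd : ∀ t ∈ Ioo (-L) L, HasDerivAt Y ((φ' t * w t * (-(E t))) * g t) t := by
    intro t ht
    have h := (hZd t ht).mul (hgd t (Ioo_subset_Icc_self ht))
    simp only [hYdef]
    refine h.congr_deriv ?_
    ring
  clear_value Y
  have hY₁ : ∀ t ∈ Ioo (-L) L, 0 ≤ (φ' t * w t * (-(E t))) * g t := by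
    intro t ht
    have htI := Ioo_subset_Icc_self ht
    exact mul_nonneg (mul_nonneg (mul_nonneg (hmono t htI) (hwpos t ht).le)
      (by linarith [hE t ht])) (hgpos t htI).le
  have hmonoY : MonotoneOn Y (Ioo (-L) L) := by
    apply monotoneOn_of_deriv_nonneg (convex_Ioo _ _)
    · intro t ht
      exact (hYd t ht).continuousAt.continuousWithinAt
    · intro t ht
      rw [interior_Ioo] at ht
      exact (hYd t ht).differentiableAt.differentiableWithinAt
    · intro t ht
      rw [interior_Ioo] at ht
      rw [(hYd t ht).deriv]
      exact hY₁ t ht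

  -- boundedness constants
  obtain ⟨M₂, hM₂⟩ := isCompact_Icc.exists_bound_of_continuousOn hc2
  have hM₂0 : 0 ≤ M₂ := le_trans (norm_nonneg _) (hM₂ 0 ⟨by linarith, by linarith⟩)
  have hφ'lip : ∀ x ∈ Icc (-L) L, ∀ y ∈ Icc (-L) L, |φ' y - φ' x| ≤ M₂ * |y - x| := by
    intro x hx y hy
    have h := Convex.norm_image_sub_le_of_norm_hasDerivWithin_le
      (f := φ') (f' := φ'') (s := Icc (-L) L)
      (fun u hu => (hd2 u hu).hasDerivWithinAt) (fun u hu => hM₂ u hu) (convex_Icc _ _) hx hy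
    simpa [Real.norm_eq_abs] using h
  have hφ'bd : ∀ t ∈ Icc (-L) L, φ' t ≤ M₂ * (L - |t|) := by
    intro t ht
    rcases le_or_gt 0 t with h0 | h0
    · have h := hφ'lip L (right_mem_Icc.mpr hLL.le) t ht
      rw [hNeu₂, sub_zero] at h
      have h2 : |t - L| = L - t := by rw [abs_of_nonpos (by linarith [ht.2])]; ring
      rw [h2] at h
      calc φ' t ≤ |φ' t| := le_abs_self _
        _ ≤ M₂ * (L - t) := h
        _ = M₂ * (L - |t|) := by rw [abs_of_nonneg h0]
    · have h := hφ'lip (-L) (left_mem_Icc.mpr hLL.le) t ht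
      rw [hNeu₁, sub_zero] at h
      have h2 : |t - -L| = L + t := by rw [abs_of_nonneg (by linarith [ht.1])]; ring
      rw [h2] at h
      calc φ' t ≤ |φ' t| := le_abs_self _
        _ ≤ M₂ * (L + t) := h
        _ = M₂ * (L - |t|) := by rw [abs_of_neg h0]; ring
  have hTcont : ContinuousOn T (Icc (-L) L) :=
    fun t ht => (hTd t ht).continuousAt.continuousWithinAt
  obtain ⟨B_T, hB_T⟩ := isCompact_Icc.exists_bound_of_continuousOn hTcont
  have hB_T0 : 0 ≤ B_T := le_trans (norm_nonneg _) (hB_T 0 ⟨by linarith, by linarith⟩)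
  have hAcont : ContinuousOn A (Icc (-L) L) := by
    rw [hAdef]
    apply ContinuousOn.mul
    · apply ContinuousOn.rpow_const
      · exact (Real.continuous_cos.comp (continuous_const.mul continuous_id)).continuousOn
      · intro t ht; exact Or.inl (ne_of_gt (hcos₂ t ht))
    · apply ContinuousOn.rpow_const
      · exact (Real.continuous_cos.comp (continuous_const.mul continuous_id)).continuousOn
      · intro t ht; exact Or.inl (ne_of_gt (hcos₁ t ht))
  obtain ⟨B_A, hB_A⟩ := isCompact_Icc.exists_bound_of_continuousOn hAcont
  have hB_A0 : 0 ≤ B_A := le_trans (norm_nonneg _) (hB_A 0 ⟨by linarith, by linarith⟩)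
  have hAle : ∀ t ∈ Icc (-L) L, A t ≤ B_A := by
    intro t ht
    have := hB_A t ht
    rwa [Real.norm_eq_abs, abs_of_pos (hApos t ht)] at this
  have hgcont : ContinuousOn g (Icc (-L) L) := by
    rw [hgdef]
    apply ContinuousOn.mul
    · apply ContinuousOn.rpow_const
      · exact (Real.continuous_cos.comp (continuous_const.mul continuous_id)).continuousOn
      · intro t ht; exact Or.inl (ne_of_gt (hcos₂ t ht))
    · apply ContinuousOn.rpow_const
      · exact (Real.continuous_cos.comp (continuous_const.mul continuous_id)).continuousOn
      · intro t ht; exact Or.inl (ne_of_gt (hcos₁ t ht))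
  obtain ⟨B_g, hB_g⟩ := isCompact_Icc.exists_bound_of_continuousOn hgcont
  have hB_g0 : 0 ≤ B_g := le_trans (norm_nonneg _) (hB_g 0 ⟨by linarith, by linarith⟩)
  have hgle : ∀ t ∈ Icc (-L) L, g t ≤ B_g := by
    intro t ht
    have := hB_g t ht
    rwa [Real.norm_eq_abs, abs_of_pos (hgpos t ht)] at this
  -- Jordan-type estimate
  have hJ : ∀ t ∈ Ioo (-L) L, (L - |t|)/L ≤ Real.cos (β*t) := by
    intro t ht
    have h2 : Real.cos (β * t) = Real.cos (β * |t|) := by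
      rcases abs_cases t with ⟨he,_⟩ | ⟨he,_⟩ <;> rw [he]
      rw [mul_neg, Real.cos_neg]
    rw [h2]
    have h3 : 0 ≤ β * |t| := mul_nonneg hβpos.le (abs_nonneg t)
    have h4 : β * |t| ≤ π/2 := by
      rw [← hβL]
      exact mul_le_mul_of_nonneg_left (habs t (Ioo_subset_Icc_self ht)) hβpos.le
    have h5 := Real.one_sub_mul_le_cos h3 h4
    have h6 : 1 - 2/π * (β * |t|) = (L - |t|)/L := by
      rw [hβdef]
      field_simp
    linarith [h5, h6.symm.le, h6.le]

  -- central pointwise bound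
  set C₁ : ℝ := B_g * (M₂ + M₂ * L * (s * B_T)) with hC₁def
  set C₂ : ℝ := B_g * (γ * (M₂ * B_A * L ^ (1 - p₀))) with hC₂def
  have hYb : ∀ t ∈ Ioo (-L) L, |Y t| ≤ C₁ * w t + C₂ * (L - |t|) ^ p₀ := by
    intro t ht
    have htI := Ioo_subset_Icc_self ht
    have hd : 0 < L - |t| := by
      have := abs_lt.mpr ⟨ht.1, ht.2⟩; linarith
    have hgt := hgpos t htI
    have hwt := hwpos t ht
    have hAt := hApos t htI
    have hcb := hcosβ t ht
    have hφ't := hmono t htI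
    have hYZ : |Y t| = |Z t| * g t := by rw [hYdef, abs_mul, abs_of_pos hgt]
    -- bound on |tan| * w
    have htanw : |Real.tan (β*t)| * w t ≤ A t * ((L - |t|)/L) ^ (p₀ - 1) := by
      have h1 : |Real.tan (β*t)| ≤ 1 / Real.cos (β*t) := by
        rw [Real.tan_eq_sin_div_cos, abs_div, abs_of_pos hcb]
        gcongr
        exact Real.abs_sin_le_one _
      have h2 : |Real.tan (β*t)| * w t ≤ (1 / Real.cos (β*t)) * w t :=
        mul_le_mul_of_nonneg_right h1 hwt.le
      have h3 : (1 / Real.cos (β*t)) * w t = A t * Real.cos (β*t) ^ (p₀ - 1) := by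
        rw [hwdef, Real.rpow_sub_one (ne_of_gt hcb)]
        field_simp
      have h4 : Real.cos (β*t) ^ (p₀ - 1) ≤ ((L - |t|)/L) ^ (p₀ - 1) := by
        apply Real.rpow_le_rpow_of_nonpos (by positivity) (hJ t ht) (by linarith)
      calc |Real.tan (β*t)| * w t ≤ (1 / Real.cos (β*t)) * w t := h2
        _ = A t * Real.cos (β*t) ^ (p₀ - 1) := h3
        _ ≤ A t * ((L - |t|)/L) ^ (p₀ - 1) := mul_le_mul_of_nonneg_left h4 hAt.le
    have hdpow : (L - |t|) * ((L - |t|)/L) ^ (p₀ - 1) = L ^ (1 - p₀) * (L - |t|) ^ p₀ := by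
      rw [Real.div_rpow hd.le hL.le, Real.rpow_sub_one (ne_of_gt hd),
        show (1 - p₀) = -(p₀ - 1) by ring, Real.rpow_neg hL.le]
      have hLp : (0:ℝ) < L ^ (p₀ - 1) := Real.rpow_pos_of_pos hL _
      field_simp
    -- three term bounds
    have hQb : |Q t| ≤ s * |T t| + γ * |Real.tan (β*t)| := by
      rw [hQdef]
      calc |s * T t - γ * Real.tan (β*t)| ≤ |s * T t| + |γ * Real.tan (β*t)| := abs_sub _ _
        _ = s * |T t| + γ * |Real.tan (β*t)| := by
            rw [abs_mul, abs_mul, abs_of_pos hs0, abs_of_pos hγpos]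
    have hTle : |T t| ≤ B_T := by
      have := hB_T t htI
      rwa [Real.norm_eq_abs] at this
    have hφ''le : |φ'' t| ≤ M₂ := by
      have := hM₂ t htI
      rwa [Real.norm_eq_abs] at this
    have e1 : |φ'' t| * w t ≤ M₂ * w t := mul_le_mul_of_nonneg_right hφ''le hwt.le
    have e2 : φ' t * (s * |T t|) * w t ≤ M₂ * L * (s * B_T) * w t := by
      apply mul_le_mul_of_nonneg_right _ hwt.le
      have h588 : φ' t ≤ M₂ * L := le_trans (hφ'bd t htI) (by nlinarith [abs_nonneg t])
      have h589 : s * |T t| ≤ s * B_T := mul_le_mul_of_nonneg_left hTle hs0.le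
      exact mul_le_mul h588 h589 (by positivity) (mul_nonneg hM₂0 hL.le)
    have e3 : φ' t * (γ * |Real.tan (β*t)|) * w t
        ≤ γ * (M₂ * B_A * L ^ (1 - p₀)) * (L - |t|) ^ p₀ := by
      have h1 : φ' t * (γ * |Real.tan (β*t)|) * w t
          = γ * (φ' t * (|Real.tan (β*t)| * w t)) := by ring
      rw [h1]
      have h2 : φ' t * (|Real.tan (β*t)| * w t)
          ≤ (M₂ * (L - |t|)) * (A t * ((L - |t|)/L) ^ (p₀ - 1)) := by
        apply mul_le_mul (hφ'bd t htI) htanw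
          (mul_nonneg (abs_nonneg _) hwt.le) (mul_nonneg hM₂0 hd.le)
      have h3 : (M₂ * (L - |t|)) * (A t * ((L - |t|)/L) ^ (p₀ - 1))
          ≤ (M₂ * (L - |t|)) * (B_A * ((L - |t|)/L) ^ (p₀ - 1)) := by
        apply mul_le_mul_of_nonneg_left _ (mul_nonneg hM₂0 hd.le)
        exact mul_le_mul_of_nonneg_right (hAle t htI) (Real.rpow_nonneg (by positivity) _)
      have h4 : (M₂ * (L - |t|)) * (B_A * ((L - |t|)/L) ^ (p₀ - 1))
          = M₂ * B_A * ((L - |t|) * ((L - |t|)/L) ^ (p₀ - 1)) := by ring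
      have h5 : M₂ * B_A * ((L - |t|) * ((L - |t|)/L) ^ (p₀ - 1))
          = M₂ * B_A * L ^ (1 - p₀) * (L - |t|) ^ p₀ := by rw [hdpow]; ring
      have h6 := le_trans h2 h3
      rw [h4, h5] at h6
      have := mul_le_mul_of_nonneg_left h6 hγpos.le
      linarith [this]
    have hZb : |Z t| ≤ M₂ * w t + (M₂ * L * (s * B_T) * w t
        + γ * (M₂ * B_A * L ^ (1 - p₀)) * (L - |t|) ^ p₀) := by
      rw [hZdef]
      have ha : |φ'' t * w t - φ' t * (Q t * w t)| ≤ |φ'' t| * w t + φ' t * |Q t| * w t := by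
        calc |φ'' t * w t - φ' t * (Q t * w t)|
            ≤ |φ'' t * w t| + |φ' t * (Q t * w t)| := abs_sub _ _
          _ = |φ'' t| * w t + φ' t * |Q t| * w t := by
              rw [abs_mul, abs_mul, abs_mul, abs_of_pos hwt, abs_of_nonneg hφ't]
              ring
      have hb : φ' t * |Q t| * w t ≤ φ' t * (s * |T t| + γ * |Real.tan (β*t)|) * w t := by
        apply mul_le_mul_of_nonneg_right _ hwt.le
        exact mul_le_mul_of_nonneg_left hQb hφ't
      have hc : φ' t * (s * |T t| + γ * |Real.tan (β*t)|) * w t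
          = φ' t * (s * |T t|) * w t + φ' t * (γ * |Real.tan (β*t)|) * w t := by ring
      linarith [ha, hb, e1, e2, e3, hc.le, hc.symm.le]
    have hgB := hgle t htI
    have hrhs_nn : 0 ≤ M₂ * w t + (M₂ * L * (s * B_T) * w t
        + γ * (M₂ * B_A * L ^ (1 - p₀)) * (L - |t|) ^ p₀) := le_trans (abs_nonneg _) hZb
    have hfin : |Z t| * g t ≤ (M₂ * w t + (M₂ * L * (s * B_T) * w t
        + γ * (M₂ * B_A * L ^ (1 - p₀)) * (L - |t|) ^ p₀)) * B_g :=
      mul_le_mul hZb hgB hgt.le hrhs_nn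
    rw [hYZ, hC₁def, hC₂def]
    calc |Z t| * g t ≤ (M₂ * w t + (M₂ * L * (s * B_T) * w t
        + γ * (M₂ * B_A * L ^ (1 - p₀)) * (L - |t|) ^ p₀)) * B_g := hfin
      _ = B_g * (M₂ + M₂ * L * (s * B_T)) * w t
          + B_g * (γ * (M₂ * B_A * L ^ (1 - p₀))) * (L - |t|) ^ p₀ := by ring

  -- limits of the bounding function at the endpoints
  have hrp0 : Tendsto (fun x : ℝ => x ^ p₀) (𝓝 0) (𝓝 0) := by
    have h := (Real.continuousAt_rpow_const 0 p₀ (Or.inr hp₀pos.le)).tendsto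
    simpa [Real.zero_rpow (ne_of_gt hp₀pos)] using h
  have hcoscont : Continuous (fun t : ℝ => Real.cos (β*t)) :=
    Real.continuous_cos.comp (continuous_const.mul continuous_id)
  have hbound_lim : ∀ e : ℝ, e ∈ ({-L, L} : Set ℝ) →
      Tendsto (fun t => C₁ * w t + C₂ * (L - |t|) ^ p₀) (𝓝[Ioo (-L) L] e) (𝓝 0) := by
    intro e he
    have hcos0 : Real.cos (β * e) = 0 := by
      rcases he with he | he
      · rw [he, mul_neg, Real.cos_neg, hβL, Real.cos_pi_div_two]
      · rw [mem_singleton_iff] at he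
        rw [he, hβL, Real.cos_pi_div_two]
    have habs0 : L - |e| = 0 := by
      rcases he with he | he
      · rw [he, abs_neg, abs_of_pos hL]; ring
      · rw [mem_singleton_iff] at he
        rw [he, abs_of_pos hL]; ring
    have heI : e ∈ Icc (-L) L := by
      rcases he with he | he
      · rw [he]; exact left_mem_Icc.mpr hLL.le
      · rw [mem_singleton_iff] at he
        rw [he]; exact right_mem_Icc.mpr hLL.le
    have hAlim : Tendsto A (𝓝[Ioo (-L) L] e) (𝓝 (A e)) :=
      ((hAcont e heI).mono Ioo_subset_Icc_self).tendsto
    have hclim : Tendsto (fun t => Real.cos (β*t) ^ p₀) (𝓝[Ioo (-L) L] e) (𝓝 0) := by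
      apply hrp0.comp
      have := (hcoscont.tendsto e).mono_left (nhdsWithin_le_nhds (s := Ioo (-L) L))
      rwa [hcos0] at this
    have hwlim : Tendsto w (𝓝[Ioo (-L) L] e) (𝓝 0) := by
      have := hAlim.mul hclim
      rw [mul_zero] at this
      apply this.congr
      intro x
      rw [hwdef]
    have hdlim : Tendsto (fun t : ℝ => (L - |t|) ^ p₀) (𝓝[Ioo (-L) L] e) (𝓝 0) := by
      apply hrp0.comp
      have hcont : Continuous (fun t : ℝ => L - |t|) := continuous_const.sub continuous_abs
      have := (hcont.tendsto e).mono_left (nhdsWithin_le_nhds (s := Ioo (-L) L))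
      rwa [habs0] at this
    have := (hwlim.const_mul C₁).add (hdlim.const_mul C₂)
    simpa using this
  have hYlim : ∀ e : ℝ, e ∈ ({-L, L} : Set ℝ) → Tendsto Y (𝓝[Ioo (-L) L] e) (𝓝 0) := by
    intro e he
    apply squeeze_zero_norm' _ (hbound_lim e he)
    filter_upwards [self_mem_nhdsWithin] with x hx
    simpa [Real.norm_eq_abs] using hYb x hx
  -- Y vanishes identically on the open interval
  have hZ0 : ∀ t ∈ Ioo (-L) L, Z t = 0 := by
    intro t ht
    have hnbR : (𝓝[Ioo (-L) L] L).NeBot := by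
      rw [nhdsWithin_Ioo_eq_nhdsLT hLL]
      infer_instance
    have hnbL : (𝓝[Ioo (-L) L] (-L)).NeBot := by
      rw [nhdsWithin_Ioo_eq_nhdsGT hLL]
      infer_instance
    have hYle : Y t ≤ 0 := by
      apply ge_of_tendsto (hYlim L (by simp))
      filter_upwards [self_mem_nhdsWithin,
        ((eventually_gt_nhds ht.2).filter_mono (nhdsWithin_le_nhds (s := Ioo (-L) L)))]
        with x hx hx2
      exact hmonoY ht hx hx2.le
    have hYge : 0 ≤ Y t := by
      apply le_of_tendsto (hYlim (-L) (by simp))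
      filter_upwards [self_mem_nhdsWithin,
        ((eventually_lt_nhds ht.1).filter_mono (nhdsWithin_le_nhds (s := Ioo (-L) L)))]
        with x hx hx2
      exact hmonoY hx ht hx2.le
    have hY0 : Y t = 0 := le_antisymm hYle hYge
    rw [hYdef] at hY0
    exact (mul_eq_zero.mp hY0).resolve_right (ne_of_gt (hgpos t (Ioo_subset_Icc_self ht)))
  -- a point where φ' is positive
  have hexists : ∃ t ∈ Ioo (-L) L, 0 < φ' t := by
    by_contra hno
    push_neg at hno
    have hzero : ∀ x ∈ Icc (-L) L, φ' x = 0 := by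
      intro x hx
      rcases eq_or_lt_of_le hx.1 with he | h1
      · rw [← he]; exact hNeu₁
      rcases eq_or_lt_of_le hx.2 with he | h2
      · rw [he]; exact hNeu₂
      · exact le_antisymm (hno x ⟨h1, h2⟩) (hmono x hx)
    apply hnonconst
    intro t ht
    have h := Convex.norm_image_sub_le_of_norm_hasDerivWithin_le
      (f := φ) (f' := φ') (s := Icc (-L) L) (C := 0)
      (fun u hu => (hd1 u hu).hasDerivWithinAt)
      (fun u hu => by rw [hzero u hu]; simp) (convex_Icc _ _) (left_mem_Icc.mpr hLL.le) ht
    rw [zero_mul, norm_le_zero_iff, sub_eq_zero] at h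
    exact h
  obtain ⟨t0, ht0, hφpos⟩ := hexists
  have hZev : Z =ᶠ[𝓝 t0] fun _ => 0 := by
    filter_upwards [Ioo_mem_nhds ht0.1 ht0.2] with x hx
    exact hZ0 x hx
  have h0 : HasDerivAt Z 0 t0 := (hasDerivAt_const t0 0).congr_of_eventuallyEq hZev
  have huniq : T t0 * Z t0 - φ' t0 * w t0 * E t0 = 0 := (hZd t0 ht0).unique h0
  have hZt0 : Z t0 = 0 := hZ0 t0 ht0
  rw [hZt0, mul_zero, zero_sub, neg_eq_zero] at huniq
  have hEt0 := hE t0 ht0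
  have hwt0 := hwpos t0 ht0
  nlinarith [mul_pos hφpos hwt0]


/-- **Proposition 5.1.** Explicit lower bound for the first nonzero Neumann eigenvalue
of the one-dimensional problem
`φ'' - (2a(m-1)√κ₂ tan(√κ₂ t) + 2b√κ₁ tan(2√κ₁ t)) φ' + λ φ = 0`
on `[-D/2, D/2]`. -/
theorem prop_5_1 (a b m : ℕ) (ha : 0 < a) (hb : 0 < b) (hm : 1 ≤ m)
    (κ₁ κ₂ : ℝ) (hκ₁ : 0 ≤ κ₁) (hκ₂ : 0 ≤ κ₂) (D : ℝ) (hD : 0 < D)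
    (hD₂ : Real.sqrt κ₂ * (D / 2) < Real.pi / 2)
    (hD₁ : 2 * Real.sqrt κ₁ * (D / 2) < Real.pi / 2)
    (lam : ℝ) (φ φ' φ'' : ℝ → ℝ)
    (hd1 : ∀ t ∈ Icc (-(D / 2)) (D / 2), HasDerivAt φ (φ' t) t)
    (hd2 : ∀ t ∈ Icc (-(D / 2)) (D / 2), HasDerivAt φ' (φ'' t) t)
    (hc2 : ContinuousOn φ'' (Icc (-(D / 2)) (D / 2)))
    (hODE : ∀ t ∈ Icc (-(D / 2)) (D / 2),
      φ'' t - (2 * a * ((m : ℝ) - 1) * Real.sqrt κ₂ * Real.tan (Real.sqrt κ₂ * t)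
          + 2 * b * Real.sqrt κ₁ * Real.tan (2 * Real.sqrt κ₁ * t)) * φ' t
        + lam * φ t = 0)
    (hNeu₁ : φ' (-(D / 2)) = 0) (hNeu₂ : φ' (D / 2) = 0)
    (hmono : ∀ t ∈ Icc (-(D / 2)) (D / 2), 0 ≤ φ' t)
    (hnonconst : ¬ ∀ t ∈ Icc (-(D / 2)) (D / 2), φ t = φ (-(D / 2))) :
    ∀ s ∈ Ioo (0 : ℝ) 1,
      4 * s * (1 - s) * Real.pi ^ 2 / D ^ 2
        + s * (2 * a * ((m : ℝ) - 1) * κ₂ + 4 * b * κ₁) ≤ lam := by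
  intro s hs
  have hm1 : (1:ℝ) ≤ (m:ℝ) := by exact_mod_cast hm
  have hr₂ : (0:ℝ) ≤ 2*(a:ℝ)*((m:ℝ)-1) := by
    have : (0:ℝ) ≤ (a:ℝ) := Nat.cast_nonneg a
    nlinarith
  have hODE' : ∀ t ∈ Icc (-(D / 2)) (D / 2),
      φ'' t - ((2*(a:ℝ)*((m:ℝ)-1)) * Real.sqrt κ₂ * Real.tan (Real.sqrt κ₂ * t)
          + (b:ℝ) * (2 * Real.sqrt κ₁) * Real.tan ((2 * Real.sqrt κ₁) * t)) * φ' t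
        + lam * φ t = 0 := by
    intro t ht
    have h := hODE t ht
    linarith [h]
  have key := gen (2 * Real.sqrt κ₁) (Real.sqrt κ₂) (b:ℝ) (2*(a:ℝ)*((m:ℝ)-1))
    (by positivity) (Real.sqrt_nonneg κ₂) (Nat.cast_nonneg b) hr₂
    (D/2) (by linarith) hD₂ hD₁ lam φ φ' φ'' hd1 hd2 hc2 hODE' hNeu₁ hNeu₂ hmono hnonconst
    (1-s) (by linarith [hs.2]) (by linarith [hs.1])
  have e1 : Real.sqrt κ₂ ^ 2 = κ₂ := Real.sq_sqrt hκ₂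
  have e2 : (2 * Real.sqrt κ₁) ^ 2 = 4 * κ₁ := by
    rw [mul_pow, Real.sq_sqrt hκ₁]; norm_num
  rw [e1, e2] at key
  have hD0 : D ≠ 0 := ne_of_gt hD
  calc 4 * s * (1 - s) * Real.pi ^ 2 / D ^ 2
        + s * (2 * a * ((m : ℝ) - 1) * κ₂ + 4 * b * κ₁)
      = (1-s) * (1-(1-s)) * (π/(D/2))^2 + (1-(1-s)) * ((2*(a:ℝ)*((m:ℝ)-1)) * κ₂ + (b:ℝ) * (4 * κ₁)) := by
        field_simp
        ring
    _ ≤ lam := key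
end

section
/- Let $m \geq 1$ be an integer, $\kappa_1,\kappa_2 \geq 0$ real numbers, and $D>0$ with $\sqrt{\kappa_2}\,D/2 < \pi/2$ and $2\sqrt{\kappa_1}\,D/2 < \pi/2$. Suppose $\lambda \in \mathbb{R}$ and $\varphi$ is a twice continuously differentiable real-valued function on $[-D/2,D/2]$ satisfying $\varphi''(t)-\big(2(m-1)T_{\kappa_2}(t)+T_{4\kappa_1}(t)\big)\varphi'(t)=-\lambda\varphi(t)$ for all $t\in[-D/2,D/2]$, with Neumann boundary conditions $\varphi'(-D/2)=\varphi'(D/2)=0$, and such that $\varphi' \geq 0$ on $[-D/2,D/2]$ and $\varphi$ is not constant. Then for every $s\in(0,1)$, $\lambda \geq 4s(1-s)\frac{\pi^2}{D^2} + 2s(m-1)\kappa_2 + 4s\kappa_1$. -/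
set_option maxHeartbeats 1000000

open Real Set MeasureTheory intervalIntegral

/-- The function `T_κ` for `κ ≥ 0`: `T_κ(t) = √κ · tan(√κ t)` (so `T_0 ≡ 0`). -/
noncomputable def Tk (κ t : ℝ) : ℝ := Real.sqrt κ * Real.tan (Real.sqrt κ * t)

lemma tk_hasDerivAt {κ t : ℝ} (hκ : 0 ≤ κ) (h : Real.cos (Real.sqrt κ * t) ≠ 0) :
    HasDerivAt (fun t => Tk κ t) (κ + (Tk κ t)^2) t := by
  have h1 : HasDerivAt (fun t : ℝ => Real.sqrt κ * t) (Real.sqrt κ) t := by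
    simpa using (hasDerivAt_id t).const_mul (Real.sqrt κ)
  have h2 := ((Real.hasDerivAt_tan h).comp t h1).const_mul (Real.sqrt κ)
  refine h2.congr_deriv (Eq.symm ?_)
  unfold Tk
  have hs : Real.sqrt κ * Real.sqrt κ = κ := Real.mul_self_sqrt hκ
  have hpy := Real.sin_sq_add_cos_sq (Real.sqrt κ * t)
  rw [Real.tan_eq_sin_div_cos]
  field_simp
  nlinarith [hpy]

lemma one_div_cos_sq {x : ℝ} (h : Real.cos x ≠ 0) :
    1 / Real.cos x ^ 2 = 1 + Real.tan x ^ 2 := by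
  rw [Real.tan_eq_sin_div_cos]
  have := Real.sin_sq_add_cos_sq x
  field_simp
  linarith

lemma tan_nonneg' {y : ℝ} (h0 : 0 ≤ y) (h1 : y < π / 2) : 0 ≤ Real.tan y := by
  rcases eq_or_lt_of_le h0 with h | h
  · rw [← h, Real.tan_zero]
  · exact (Real.tan_pos_of_pos_of_lt_pi_div_two h h1).le

lemma tan_le_inv {y : ℝ} (h0 : 0 ≤ y) (h1 : y < π / 2) :
    Real.tan y ≤ 1 / (π / 2 - y) := by
  rcases eq_or_lt_of_le h0 with h | h
  · rw [← h, Real.tan_zero, sub_zero]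
    have := Real.pi_pos
    positivity
  · have hx : 0 < π / 2 - y := by linarith
    have h2 : π / 2 - y < Real.tan (π / 2 - y) := Real.lt_tan hx (by linarith)
    have h3 : Real.tan y = 1 / Real.tan (π / 2 - y) := by
      rw [Real.tan_pi_div_two_sub, one_div, inv_inv]
    rw [h3]
    exact one_div_le_one_div_of_le hx h2.le

lemma poincare (L : ℝ) (hL : 0 < L) (w w' : ℝ → ℝ)
    (hw : ContinuousOn w (Icc (-L) L)) (hw' : ContinuousOn w' (Icc (-L) L))
    (hd : ∀ t ∈ Ioo (-L) L, HasDerivAt w (w' t) t)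
    (C : ℝ) (hC : 0 ≤ C)
    (hb : ∀ t ∈ Icc (-L) L, |w t| ≤ C * (L - |t|))
    (hb' : ∀ t ∈ Icc (-L) L, |w' t| ≤ C) :
    (π / (2 * L)) ^ 2 * ∫ t in (-L)..L, (w t) ^ 2 ≤ ∫ t in (-L)..L, (w' t) ^ 2 := by
  have hLL : -L < L := by linarith
  have hLL' : -L ≤ L := hLL.le
  set β := π / (2 * L) with hβdef
  have hβ : 0 < β := by positivity
  have hβL : β * L = π / 2 := by rw [hβdef]; field_simp
  set ρ : ℝ → ℝ := fun t => β * Real.tan (β * t) with hρdef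
  set P : ℝ → ℝ := fun t => β ^ 2 * (1 + Real.tan (β * t) ^ 2) * (w t) ^ 2 with hPdef
  set Q : ℝ → ℝ := fun t => 2 * ρ t * w t * w' t with hQdef
  set H : ℝ → ℝ := fun t => ρ t * (w t) ^ 2 with hHdef
  have hmem : ∀ t ∈ Ioo (-L) L, -(π/2) < β * t ∧ β * t < π/2 := by
    intro t ht
    constructor
    · have := mul_lt_mul_of_pos_left ht.1 hβ
      rw [mul_neg, hβL] at this; linarith
    · have := mul_lt_mul_of_pos_left ht.2 hβ
      rw [hβL] at this; linarith
  have hcos : ∀ t ∈ Ioo (-L) L, Real.cos (β * t) ≠ 0 := by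
    intro t ht
    have h := hmem t ht
    exact (Real.cos_pos_of_mem_Ioo ⟨h.1, h.2⟩).ne'
  have habsL : ∀ t ∈ Ioo (-L) L, 0 < L - |t| := by
    intro t ht
    rcases le_or_gt 0 t with h0 | h0
    · rw [abs_of_nonneg h0]; linarith [ht.2]
    · rw [abs_of_neg h0]; linarith [ht.1]
  -- central bound:  β·|tan βt| ≤ 1/(L-|t|)
  have hX : ∀ t ∈ Ioo (-L) L, β * |Real.tan (β * t)| ≤ 1 / (L - |t|) := by
    intro t ht
    have h := hmem t ht
    have hLt := habsL t ht
    have h1 : β * |t| < π / 2 := by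
      rcases le_or_gt 0 t with h0 | h0
      · rw [abs_of_nonneg h0]; exact h.2
      · rw [abs_of_neg h0]; nlinarith [h.1]
    have habs : |Real.tan (β * t)| = Real.tan (β * |t|) := by
      rcases le_or_gt 0 t with h0 | h0
      · rw [abs_of_nonneg h0]
        exact abs_of_nonneg (tan_nonneg' (by positivity) (by rwa [abs_of_nonneg h0] at h1))
      · rw [abs_of_neg h0]
        have he : β * t = -(β * -t) := by ring
        rw [he, Real.tan_neg, abs_neg]
        exact abs_of_nonneg (tan_nonneg' (by nlinarith) (by rwa [abs_of_neg h0] at h1))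
    rw [habs]
    have h2 := tan_le_inv (by positivity) h1
    have h3 : π / 2 - β * |t| = β * (L - |t|) := by rw [← hβL]; ring
    rw [h3] at h2
    calc β * Real.tan (β * |t|) ≤ β * (1 / (β * (L - |t|))) :=
          mul_le_mul_of_nonneg_left h2 hβ.le
      _ = 1 / (L - |t|) := by field_simp
  -- pointwise bounds
  have hH0 : H L = 0 ∧ H (-L) = 0 := by
    constructor
    · show ρ L * (w L)^2 = 0
      rw [hρdef]; simp only []
      rw [hβL, Real.tan_pi_div_two]; ring
    · show ρ (-L) * (w (-L))^2 = 0
      rw [hρdef]; simp only []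
      rw [mul_neg, hβL, Real.tan_neg, Real.tan_pi_div_two]; ring
  have hHb : ∀ t ∈ Icc (-L) L, |H t| ≤ C ^ 2 * (L - |t|) := by
    intro t ht
    rcases eq_or_lt_of_le ht.1 with h1 | h1
    · rw [← h1, hH0.2]
      rw [abs_neg, abs_of_pos hL]
      simp
    rcases eq_or_lt_of_le ht.2 with h2 | h2
    · rw [h2, hH0.1, abs_of_pos hL]
      simp
    have hIoo : t ∈ Ioo (-L) L := ⟨h1, h2⟩
    have hLt := habsL t hIoo
    have h5 : (w t)^2 ≤ (C * (L - |t|))^2 := by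
      rw [← sq_abs (w t)]
      exact pow_le_pow_left₀ (abs_nonneg _) (hb t ht) 2
    have habs : |H t| = (β * |Real.tan (β * t)|) * (w t)^2 := by
      show |ρ t * (w t)^2| = _
      rw [hρdef]; simp only []
      rw [abs_mul, abs_mul, abs_of_pos hβ, abs_pow, sq_abs]
    rw [habs]
    calc (β * |Real.tan (β * t)|) * (w t)^2
        ≤ (1 / (L - |t|)) * (C * (L - |t|))^2 :=
          mul_le_mul (hX t hIoo) h5 (sq_nonneg _) (one_div_pos.2 hLt).le
      _ = C ^ 2 * (L - |t|) := by field_simp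
  have hwL : ∀ t ∈ Icc (-L) L, (w t)^2 ≤ C^2 * L^2 := by
    intro t ht
    have h4 := hb t ht
    have h5 : |w t| ≤ C * L := by
      refine le_trans h4 ?_
      have := abs_nonneg t
      nlinarith
    calc (w t)^2 = |w t|^2 := (sq_abs _).symm
      _ ≤ (C*L)^2 := pow_le_pow_left₀ (abs_nonneg _) h5 2
      _ = C^2 * L^2 := by ring
  have hPb : ∀ t ∈ Ioo (-L) L, |P t| ≤ β^2 * (C^2 * L^2) + C^2 := by
    intro t ht
    have htI : t ∈ Icc (-L) L := Ioo_subset_Icc_self ht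
    have hLt := habsL t ht
    have h5 : (w t)^2 ≤ (C * (L - |t|))^2 := by
      rw [← sq_abs (w t)]
      exact pow_le_pow_left₀ (abs_nonneg _) (hb t htI) 2
    have hPeq : |P t| = β^2 * (w t)^2 + (β * |Real.tan (β*t)|)^2 * (w t)^2 := by
      show |β ^ 2 * (1 + Real.tan (β * t) ^ 2) * (w t) ^ 2| = _
      rw [abs_of_nonneg (by positivity)]
      rw [mul_pow, sq_abs]
      ring
    rw [hPeq]
    have h7 : (β * |Real.tan (β*t)|)^2 * (w t)^2 ≤ C^2 := by
      calc (β * |Real.tan (β*t)|)^2 * (w t)^2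
          ≤ (1/(L - |t|))^2 * (C * (L - |t|))^2 := by
            apply mul_le_mul _ h5 (sq_nonneg _) (sq_nonneg _)
            exact pow_le_pow_left₀ (by positivity) (hX t ht) 2
        _ = C^2 := by field_simp
    have h8 := hwL t htI
    nlinarith [sq_nonneg β]
  have hQb : ∀ t ∈ Ioo (-L) L, |Q t| ≤ 2 * C^2 := by
    intro t ht
    have htI : t ∈ Icc (-L) L := Ioo_subset_Icc_self ht
    have hLt := habsL t ht
    have h4 := hb t htI
    have h5 := hb' t htI
    have hQeq : |Q t| = 2 * (β * |Real.tan (β*t)|) * |w t| * |w' t| := by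
      show |2 * ρ t * w t * w' t| = _
      rw [hρdef]; simp only []
      rw [abs_mul, abs_mul, abs_mul, abs_mul]
      rw [abs_of_nonneg (by norm_num : (0:ℝ) ≤ 2), abs_of_pos hβ]
    rw [hQeq]
    calc 2 * (β * |Real.tan (β*t)|) * |w t| * |w' t|
        ≤ 2 * (1/(L - |t|)) * (C * (L - |t|)) * C := by
          apply mul_le_mul _ h5 (abs_nonneg _) (by positivity)
          apply mul_le_mul _ h4 (abs_nonneg _) (by positivity)
          exact mul_le_mul_of_nonneg_left (hX t ht) (by norm_num)
      _ = 2 * C^2 := by field_simp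
  -- continuity of H on the closed interval
  have hρcont : ∀ t ∈ Ioo (-L) L, ContinuousAt ρ t := by
    intro t ht
    have h1 : ContinuousAt (fun t : ℝ => β * t) t := (continuous_const.mul continuous_id).continuousAt
    have h2 : ContinuousAt Real.tan (β * t) := Real.continuousAt_tan.2 (hcos t ht)
    exact continuousAt_const.mul (h2.comp h1)
  have hwCA : ∀ t ∈ Ioo (-L) L, ContinuousAt w t := by
    intro t ht
    exact hw.continuousAt (Icc_mem_nhds ht.1 ht.2)
  have hw'CA : ∀ t ∈ Ioo (-L) L, ContinuousAt w' t := by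
    intro t ht
    exact hw'.continuousAt (Icc_mem_nhds ht.1 ht.2)
  have hsqueeze : ∀ t₀ ∈ Icc (-L) L, H t₀ = 0 → C^2 * (L - |t₀|) = 0 →
      ContinuousWithinAt H (Icc (-L) L) t₀ := by
    intro t₀ ht₀ hH₀ hval
    unfold ContinuousWithinAt
    rw [hH₀]
    apply tendsto_of_tendsto_of_tendsto_of_le_of_le'
      (g := fun t => -(C^2 * (L - |t|))) (h := fun t => C^2 * (L - |t|))
    · have hcont : Continuous (fun t : ℝ => -(C^2 * (L - |t|))) :=
        (continuous_const.mul (continuous_const.sub continuous_abs)).neg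
      have h3 := (hcont.tendsto t₀).mono_left (nhdsWithin_le_nhds (s := Icc (-L) L))
      rw [hval, neg_zero] at h3
      exact h3
    · have hcont : Continuous (fun t : ℝ => C^2 * (L - |t|)) :=
        continuous_const.mul (continuous_const.sub continuous_abs)
      have h3 := (hcont.tendsto t₀).mono_left (nhdsWithin_le_nhds (s := Icc (-L) L))
      rw [hval] at h3
      exact h3
    · filter_upwards [eventually_mem_nhdsWithin] with x hx
      have := abs_le.1 (hHb x hx)
      linarith [this.1]
    · filter_upwards [eventually_mem_nhdsWithin] with x hx
      have := abs_le.1 (hHb x hx)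
      linarith [this.2]
  have hHcont : ContinuousOn H (Icc (-L) L) := by
    intro t ht
    rcases eq_or_lt_of_le ht.1 with h1 | h1
    · rw [← h1]
      apply hsqueeze (-L) (by constructor <;> [exact le_rfl; linarith]) hH0.2
      rw [abs_neg, abs_of_pos hL]; ring
    rcases eq_or_lt_of_le ht.2 with h2 | h2
    · rw [h2]
      apply hsqueeze L (by constructor <;> [linarith; exact le_rfl]) hH0.1
      rw [abs_of_pos hL]; ring
    · exact (((hρcont t ⟨h1, h2⟩).mul ((hwCA t ⟨h1, h2⟩).pow 2))).continuousWithinAt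
  -- derivative of H
  have hHd : ∀ t ∈ Ioo (-L) L, HasDerivAt H (P t + Q t) t := by
    intro t ht
    have h1 : HasDerivAt (fun t : ℝ => β * t) β t := by
      simpa using (hasDerivAt_id t).const_mul β
    have h2 := ((Real.hasDerivAt_tan (hcos t ht)).comp t h1).const_mul β
    have hρd : HasDerivAt ρ (β^2 * (1 + Real.tan (β * t)^2)) t := by
      refine h2.congr_deriv (Eq.symm ?_)
      rw [one_div_cos_sq (hcos t ht)]
      ring
    have hwd := (hd t ht).pow 2
    have := hρd.mul hwd
    refine this.congr_deriv (Eq.symm ?_)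
    show P t + Q t = _
    rw [hPdef, hQdef, hρdef]
    simp only []
    push_cast [Pi.pow_apply]
    ring
  -- integrability of P + Q
  have hM : ∃ M : ℝ, ∀ t ∈ Ioo (-L) L, ‖P t + Q t‖ ≤ M := by
    refine ⟨β^2 * (C^2 * L^2) + C^2 + 2 * C^2, fun t ht => ?_⟩
    rw [Real.norm_eq_abs]
    calc |P t + Q t| ≤ |P t| + |Q t| := abs_add_le _ _
      _ ≤ β^2 * (C^2 * L^2) + C^2 + 2 * C^2 := by
          have := hPb t ht; have := hQb t ht; linarith
  obtain ⟨M, hMb⟩ := hM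
  have hPQcontOn : ContinuousOn (fun t => P t + Q t) (Ioo (-L) L) := by
    intro t ht
    have : ContinuousAt (fun t => P t + Q t) t := by
      have htan : ContinuousAt (fun t : ℝ => Real.tan (β * t)) t :=
        (Real.continuousAt_tan.2 (hcos t ht)).comp ((continuous_const.mul continuous_id).continuousAt)
      have hPc : ContinuousAt P t := by
        apply ContinuousAt.mul
        · exact (continuousAt_const.mul (continuousAt_const.add (htan.pow 2)))
        · exact (hwCA t ht).pow 2
      have hQc : ContinuousAt Q t := by
        apply ContinuousAt.mul
        apply ContinuousAt.mul
        · exact continuousAt_const.mul (hρcont t ht)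
        · exact hwCA t ht
        · exact hw'CA t ht
      exact hPc.add hQc
    exact this.continuousWithinAt
  have hPQint : IntervalIntegrable (fun t => P t + Q t) volume (-L) L := by
    rw [intervalIntegrable_iff, uIoc_of_le hLL']
    have hIoo : IntegrableOn (fun t => P t + Q t) (Ioo (-L) L) volume := by
      apply Integrable.mono' (g := fun _ => M)
      · exact integrableOn_const measure_Ioo_lt_top.ne
      · exact hPQcontOn.aestronglyMeasurable measurableSet_Ioo
      · exact (ae_restrict_iff' measurableSet_Ioo).2 (Filter.Eventually.of_forall hMb)
    exact hIoo.congr_set_ae Ioo_ae_eq_Ioc.symm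
  -- FTC
  have hFTC : ∫ t in (-L)..L, (P t + Q t) = H L - H (-L) :=
    integral_eq_sub_of_hasDerivAt_of_le hLL' hHcont hHd hPQint
  rw [hH0.1, hH0.2, sub_zero] at hFTC
  -- basic integrability
  have hIw2 : IntervalIntegrable (fun t => (w t)^2) volume (-L) L := by
    apply ContinuousOn.intervalIntegrable
    rw [uIcc_of_le hLL']
    exact hw.pow 2
  have hIw'2 : IntervalIntegrable (fun t => (w' t)^2) volume (-L) L := by
    apply ContinuousOn.intervalIntegrable
    rw [uIcc_of_le hLL']
    exact hw'.pow 2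
  have hIG2 : IntervalIntegrable (fun t => (w' t + ρ t * w t)^2) volume (-L) L := by
    have heq : (fun t => (w' t + ρ t * w t)^2)
        = fun t => ((w' t)^2 - β^2 * (w t)^2) + (P t + Q t) := by
      funext t
      rw [hPdef, hQdef, hρdef]
      simp only []
      ring
    rw [heq]
    exact ((hIw'2.sub (hIw2.const_mul (β^2))).add hPQint)
  -- assembly
  have hkey : ∫ t in (-L)..L, ((w' t)^2 - β^2 * (w t)^2)
      = (∫ t in (-L)..L, (w' t + ρ t * w t)^2) - ∫ t in (-L)..L, (P t + Q t) := by
    rw [← intervalIntegral.integral_sub hIG2 hPQint]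
    apply intervalIntegral.integral_congr
    intro t _
    rw [hPdef, hQdef, hρdef]
    simp only []
    ring
  rw [hFTC, sub_zero] at hkey
  have hpos : 0 ≤ ∫ t in (-L)..L, (w' t + ρ t * w t)^2 :=
    intervalIntegral.integral_nonneg hLL' (fun t _ => sq_nonneg _)
  have hsplit : ∫ t in (-L)..L, ((w' t)^2 - β^2 * (w t)^2)
      = (∫ t in (-L)..L, (w' t)^2) - β^2 * ∫ t in (-L)..L, (w t)^2 := by
    rw [intervalIntegral.integral_sub hIw'2 (hIw2.const_mul (β^2))]
    rw [intervalIntegral.integral_const_mul]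
  rw [hsplit] at hkey
  have : 0 ≤ (∫ t in (-L)..L, (w' t)^2) - β^2 * ∫ t in (-L)..L, (w t)^2 := by
    rw [hkey]; exact hpos
  linarith


lemma ode_zero (L : ℝ) (hL : 0 < L) (u u' F : ℝ → ℝ)
    (hd : ∀ t ∈ Icc (-L) L, HasDerivAt u (u' t) t)
    (hd' : ∀ t ∈ Ioo (-L) L, HasDerivAt u' (F t) t)
    (hucont : ContinuousOn u (Icc (-L) L))
    (hu'cont : ContinuousOn u' (Icc (-L) L))
    (K : ℝ) (hK : 1 ≤ K)
    (hF : ∀ t ∈ Ioo (-L) L, |F t| ≤ K * max |u t| |u' t|)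
    (c : ℝ) (hc : c ∈ Ioo (-L) L) (hc0 : u c = 0) (hc0' : u' c = 0) :
    ∀ t ∈ Icc (-L) L, u t = 0 := by
  set f : ℝ → ℝ × ℝ := fun t => (u t, u' t) with hfdef
  set f' : ℝ → ℝ × ℝ := fun t => (u' t, F t) with hf'def
  have hfd : ∀ t ∈ Ioo (-L) L, HasDerivAt f (f' t) t := fun t ht =>
    (hd t (Ioo_subset_Icc_self ht)).prodMk (hd' t ht)
  have hnorm : ∀ t : ℝ, ‖f t‖ = max |u t| |u' t| := by
    intro t
    rw [Prod.norm_def, Real.norm_eq_abs, Real.norm_eq_abs]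
  have hbound : ∀ t ∈ Ioo (-L) L, ‖f' t‖ ≤ K * ‖f t‖ + 0 := by
    intro t ht
    rw [add_zero, hnorm, Prod.norm_def, Real.norm_eq_abs, Real.norm_eq_abs]
    apply max_le
    · calc |u' t| ≤ max |u t| |u' t| := le_max_right _ _
        _ ≤ K * max |u t| |u' t| := le_mul_of_one_le_left (le_max_of_le_right (abs_nonneg _)) hK
    · exact hF t ht
  have hfc : ‖f c‖ ≤ 0 := by
    rw [hnorm, hc0, hc0']
    simp
  -- right of c
  have hright : ∀ t ∈ Icc c L, u t = 0 := by
    intro t ht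
    have key := norm_le_gronwallBound_of_norm_deriv_right_le
      (f := f) (f' := f') (δ := 0) (K := K) (ε := 0) (a := c) (b := L)
      (by
        apply ContinuousOn.prodMk
        · exact hucont.mono (Icc_subset_Icc hc.1.le le_rfl)
        · exact hu'cont.mono (Icc_subset_Icc hc.1.le le_rfl))
      (fun x hx => (hfd x ⟨lt_of_lt_of_le hc.1 hx.1, hx.2⟩).hasDerivWithinAt)
      hfc
      (fun x hx => hbound x ⟨lt_of_lt_of_le hc.1 hx.1, hx.2⟩)
      t ht
    rw [gronwallBound_ε0_δ0, hnorm] at key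
    have := le_max_left |u t| |u' t|
    have habs : |u t| ≤ 0 := le_trans this key
    have := abs_nonneg (u t)
    exact abs_eq_zero.1 (le_antisymm habs this)
  -- left of c, by reflection
  have hleft : ∀ t ∈ Icc (-L) c, u t = 0 := by
    set g : ℝ → ℝ × ℝ := fun t => (u (2*c - t), u' (2*c - t)) with hgdef
    set g' : ℝ → ℝ × ℝ := fun t => (-u' (2*c - t), -F (2*c - t)) with hg'def
    have hrefl : ∀ t : ℝ, HasDerivAt (fun x : ℝ => 2*c - x) (-1 : ℝ) t := by
      intro t
      have h := ((hasDerivAt_id t).const_mul (-1 : ℝ)).add_const (2*c)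
      have he : (fun x : ℝ => -1 * id x + 2*c) = (fun x : ℝ => 2*c - x) := by
        funext x; simp; ring
      rw [he] at h
      simpa using h
    have hmaps : ∀ t ∈ Icc c (2*c + L), 2*c - t ∈ Icc (-L) c := by
      intro t ht
      exact ⟨by linarith [ht.2], by linarith [ht.1]⟩
    have hgd : ∀ t ∈ Ico c (2*c + L), HasDerivAt g (g' t) t := by
      intro t ht
      have hmem : 2*c - t ∈ Ioo (-L) L := by
        constructor
        · linarith [ht.2]
        · have : 2*c - t ≤ c := by linarith [ht.1]
          linarith [hc.2]
      have h1 : HasDerivAt (fun x : ℝ => u (2*c - x)) (-u' (2*c - t)) t := by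
        have := (hd _ (Ioo_subset_Icc_self hmem)).comp t (hrefl t)
        exact this.congr_deriv (by ring)
      have h2 : HasDerivAt (fun x : ℝ => u' (2*c - x)) (-F (2*c - t)) t := by
        have := (hd' _ hmem).comp t (hrefl t)
        exact this.congr_deriv (by ring)
      exact h1.prodMk h2
    have hgc : ‖g c‖ ≤ 0 := by
      have : (2*c - c) = c := by ring
      rw [hgdef]
      simp only [this]
      rw [Prod.norm_def, Real.norm_eq_abs, Real.norm_eq_abs, hc0, hc0']
      simp
    have hgbound : ∀ t ∈ Ico c (2*c + L), ‖g' t‖ ≤ K * ‖g t‖ + 0 := by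
      intro t ht
      have hmem : 2*c - t ∈ Ioo (-L) L := by
        constructor
        · linarith [ht.2]
        · have : 2*c - t ≤ c := by linarith [ht.1]
          linarith [hc.2]
      rw [add_zero, hgdef, hg'def]
      simp only [Prod.norm_def, Real.norm_eq_abs, Real.norm_eq_abs, abs_neg]
      apply max_le
      · calc |u' (2*c - t)| ≤ max |u (2*c - t)| |u' (2*c - t)| := le_max_right _ _
          _ ≤ K * max |u (2*c - t)| |u' (2*c - t)| :=
            le_mul_of_one_le_left (le_max_of_le_right (abs_nonneg _)) hK
      · exact hF _ hmem
    intro τ hτ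
    have htmem : 2*c - τ ∈ Icc c (2*c + L) := ⟨by linarith [hτ.2], by linarith [hτ.1]⟩
    have key := norm_le_gronwallBound_of_norm_deriv_right_le
      (f := g) (f' := g') (δ := 0) (K := K) (ε := 0) (a := c) (b := 2*c + L)
      (by
        apply ContinuousOn.prodMk
        · apply hucont.comp (Continuous.continuousOn (by continuity))
          intro t ht
          exact Icc_subset_Icc le_rfl hc.2.le (hmaps t ht)
        · apply hu'cont.comp (Continuous.continuousOn (by continuity))
          intro t ht
          exact Icc_subset_Icc le_rfl hc.2.le (hmaps t ht))
      (fun x hx => (hgd x hx).hasDerivWithinAt)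
      hgc hgbound (2*c - τ) htmem
    rw [gronwallBound_ε0_δ0] at key
    have heq : (2*c - (2*c - τ)) = τ := by ring
    rw [hgdef] at key
    simp only [heq] at key
    rw [Prod.norm_def, Real.norm_eq_abs, Real.norm_eq_abs] at key
    have h1 : |u τ| ≤ 0 := le_trans (le_max_left _ _) key
    exact abs_eq_zero.1 (le_antisymm h1 (abs_nonneg _))
  intro t ht
  rcases le_or_gt t c with h | h
  · exact hleft t ⟨ht.1, h⟩
  · exact hright t ⟨h.le, ht.2⟩


lemma final_arith (s σ K4 lam X : ℝ) (hs0 : 0 < s) (hs1 : s < 1)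
    (hσ : σ = max 1 (1/(2*(1-s)))) (hK40 : 0 ≤ K4) (hX : 0 < X)
    (h : (2*σ-1)/σ * X + (σ - 1/2) * K4 ≤ σ * lam) :
    4*s*(1-s)*X + s*K4 ≤ lam := by
  have h1s : 0 < 1 - s := by linarith
  rcases le_or_gt (1/(2*(1-s))) 1 with hcase | hcase
  · have hσeq : σ = 1 := by rw [hσ]; exact max_eq_left hcase
    rw [hσeq] at h
    norm_num at h
    have hshalf : s ≤ 1/2 := by
      by_contra hcon
      push_neg at hcon
      have h2 : 2*(1-s) < 1 := by nlinarith
      have h3 : 1 < 1/(2*(1-s)) := by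
        rw [lt_div_iff₀ (by linarith)]
        linarith
      linarith
    have h4s : 4*s*(1-s) ≤ 1 := by nlinarith [sq_nonneg (2*s-1)]
    nlinarith [h, hX, hK40]
  · have hσeq : σ = 1/(2*(1-s)) := by rw [hσ]; exact max_eq_right hcase.le
    have hσpos : 0 < σ := by rw [hσeq]; positivity
    have hkey : (2*σ-1)/σ * X + (σ - 1/2) * K4 = σ * (4*s*(1-s)*X + s*K4) := by
      rw [hσeq]
      field_simp
      ring
    rw [hkey] at h
    exact le_of_mul_le_mul_left h hσpos

/-- **Proposition 1.1.** Explicit lower bound for the one-dimensional comparison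
eigenvalue arising in the Kähler setting: any nonconstant monotone Neumann
eigenfunction of `φ'' - (2(m-1)T_{κ₂} + T_{4κ₁}) φ' = -λ φ` on `[-D/2, D/2]`
has eigenvalue `λ ≥ 4s(1-s)π²/D² + 2s(m-1)κ₂ + 4sκ₁` for every `s ∈ (0,1)`. -/
theorem prop_1_1 (m : ℕ) (hm : 1 ≤ m)
    (κ₁ κ₂ : ℝ) (hκ₁ : 0 ≤ κ₁) (hκ₂ : 0 ≤ κ₂) (D : ℝ) (hD : 0 < D)
    (hD₂ : Real.sqrt κ₂ * (D / 2) < Real.pi / 2)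
    (hD₁ : 2 * Real.sqrt κ₁ * (D / 2) < Real.pi / 2)
    (lam : ℝ) (φ φ' φ'' : ℝ → ℝ)
    (hd1 : ∀ t ∈ Icc (-(D / 2)) (D / 2), HasDerivAt φ (φ' t) t)
    (hd2 : ∀ t ∈ Icc (-(D / 2)) (D / 2), HasDerivAt φ' (φ'' t) t)
    (hc2 : ContinuousOn φ'' (Icc (-(D / 2)) (D / 2)))
    (hODE : ∀ t ∈ Icc (-(D / 2)) (D / 2),
      φ'' t - (2 * ((m : ℝ) - 1) * Tk κ₂ t + Tk (4 * κ₁) t) * φ' t = -lam * φ t)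
    (hNeu₁ : φ' (-(D / 2)) = 0) (hNeu₂ : φ' (D / 2) = 0)
    (hmono : ∀ t ∈ Icc (-(D / 2)) (D / 2), 0 ≤ φ' t)
    (hnonconst : ¬ ∀ t ∈ Icc (-(D / 2)) (D / 2), φ t = φ (-(D / 2))) :
    ∀ s ∈ Ioo (0 : ℝ) 1,
      4 * s * (1 - s) * Real.pi ^ 2 / D ^ 2
        + 2 * s * ((m : ℝ) - 1) * κ₂ + 4 * s * κ₁ ≤ lam := by
  intro s hs
  set L := D / 2 with hLdef
  have hL : 0 < L := by positivity
  have hLL : -L < L := by linarith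
  have hLL' : -L ≤ L := hLL.le
  have h0mem : (0:ℝ) ∈ Ioo (-L) L := ⟨by linarith, hL⟩
  have hs4 : Real.sqrt (4*κ₁) = 2 * Real.sqrt κ₁ := by
    rw [show (4:ℝ)*κ₁ = 2^2*κ₁ by ring, Real.sqrt_mul (by positivity) κ₁,
      Real.sqrt_sq (by norm_num)]
  have hcosgen : ∀ (c : ℝ), 0 ≤ c → c * L < π/2 →
      ∀ t ∈ Icc (-L) L, 0 < Real.cos (c * t) := by
    intro c hc hcL t ht
    apply Real.cos_pos_of_mem_Ioo
    constructor
    · have h1 : c * t ≥ c * (-L) := mul_le_mul_of_nonneg_left ht.1 hc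
      have : c * (-L) = -(c * L) := by ring
      rw [this] at h1
      linarith
    · have h1 : c * t ≤ c * L := mul_le_mul_of_nonneg_left ht.2 hc
      linarith
  have hcos2 : ∀ t ∈ Icc (-L) L, 0 < Real.cos (Real.sqrt κ₂ * t) :=
    hcosgen _ (Real.sqrt_nonneg _) hD₂
  have hcos1 : ∀ t ∈ Icc (-L) L, 0 < Real.cos (Real.sqrt (4*κ₁) * t) :=
    hcosgen _ (Real.sqrt_nonneg _) (by rw [hs4]; exact hD₁)
  -- the drift A and its derivative A'
  set A : ℝ → ℝ := fun t => 2 * ((m:ℝ) - 1) * Tk κ₂ t + Tk (4*κ₁) t with hAdef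
  set A' : ℝ → ℝ := fun t => 2 * ((m:ℝ) - 1) * (κ₂ + (Tk κ₂ t)^2) + (4*κ₁ + (Tk (4*κ₁) t)^2)
    with hA'def
  have hAd : ∀ t ∈ Icc (-L) L, HasDerivAt A (A' t) t := by
    intro t ht
    exact ((tk_hasDerivAt hκ₂ (hcos2 t ht).ne').const_mul (2 * ((m:ℝ) - 1))).add
      (tk_hasDerivAt (by positivity) (hcos1 t ht).ne')
  have hAcont : ContinuousOn A (Icc (-L) L) := fun t ht =>
    (hAd t ht).continuousAt.continuousWithinAt
  have htk2cont : ContinuousOn (fun t => Tk κ₂ t) (Icc (-L) L) := fun t ht =>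
    (tk_hasDerivAt hκ₂ (hcos2 t ht).ne').continuousAt.continuousWithinAt
  have htk1cont : ContinuousOn (fun t => Tk (4*κ₁) t) (Icc (-L) L) := fun t ht =>
    (tk_hasDerivAt (by positivity) (hcos1 t ht).ne').continuousAt.continuousWithinAt
  have hA'cont : ContinuousOn A' (Icc (-L) L) := by
    rw [hA'def]
    apply ContinuousOn.add
    · exact continuousOn_const.mul (continuousOn_const.add (htk2cont.pow 2))
    · exact continuousOn_const.add (htk1cont.pow 2)
  -- continuity of φ, φ'
  have hφcont : ContinuousOn φ (Icc (-L) L) := fun t ht =>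
    (hd1 t ht).continuousAt.continuousWithinAt
  have hφ'cont : ContinuousOn φ' (Icc (-L) L) := fun t ht =>
    (hd2 t ht).continuousAt.continuousWithinAt
  -- third derivative
  set u'' : ℝ → ℝ := fun t => A' t * φ' t + A t * φ'' t - lam * φ' t with hu''def
  have hODE' : ∀ t ∈ Icc (-L) L, φ'' t = A t * φ' t - lam * φ t := by
    intro t ht
    have := hODE t ht
    rw [hAdef]
    simp only []
    linarith [this]
  have hd3 : ∀ t ∈ Ioo (-L) L, HasDerivAt φ'' (u'' t) t := by
    intro t ht
    have hIccnhds : Icc (-L) L ∈ nhds t := Icc_mem_nhds ht.1 ht.2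
    have heq : φ'' =ᶠ[nhds t] fun x => A x * φ' x - lam * φ x := by
      filter_upwards [hIccnhds] with x hx
      exact hODE' x hx
    have htI : t ∈ Icc (-L) L := Ioo_subset_Icc_self ht
    have hrhs : HasDerivAt (fun x => A x * φ' x - lam * φ x)
        (A' t * φ' t + A t * φ'' t - lam * φ' t) t :=
      ((hAd t htI).mul (hd2 t htI)).sub ((hd1 t htI).const_mul lam)
    exact hrhs.congr_of_eventuallyEq heq
  -- φ' is positive on the open interval
  have hφconst : (∀ t ∈ Icc (-L) L, φ' t = 0) → False := by
    intro hzero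
    apply hnonconst
    intro x hx
    rcases eq_or_lt_of_le hx.1 with h1 | h1
    · rw [← h1]
    · obtain ⟨c, hcmem, hcs⟩ := exists_hasDerivAt_eq_slope φ φ' h1
        (hφcont.mono (Icc_subset_Icc le_rfl hx.2))
        (fun y hy => hd1 y ⟨hy.1.le, hy.2.le.trans hx.2⟩)
      rw [hzero c ⟨hcmem.1.le, hcmem.2.le.trans hx.2⟩] at hcs
      have hne : x - (-L) ≠ 0 := by intro h; apply h1.ne; linarith
      have hcs' := hcs.symm
      rw [div_eq_zero_iff] at hcs'
      rcases hcs' with h | h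
      · linarith
      · exact absurd h hne
  have upos : ∀ t ∈ Ioo (-L) L, 0 < φ' t := by
    intro t ht
    rcases lt_or_eq_of_le (hmono t (Ioo_subset_Icc_self ht)) with h | h
    · exact h
    exfalso
    -- u vanishes at t with u' t = 0, so u ≡ 0
    have hmin : IsLocalMin φ' t := by
      unfold IsLocalMin IsMinFilter
      filter_upwards [Icc_mem_nhds ht.1 ht.2] with x hx
      rw [← h]
      exact hmono x hx
    have ht0 : φ'' t = 0 := hmin.hasDerivAt_eq_zero (hd2 t (Ioo_subset_Icc_self ht))
    -- bounds for A, A'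
    obtain ⟨MA, hMA⟩ := isCompact_Icc.exists_bound_of_continuousOn hAcont
    obtain ⟨MA', hMA'⟩ := isCompact_Icc.exists_bound_of_continuousOn hA'cont
    set K : ℝ := |MA| + |MA'| + |lam| + 1 with hKdef
    have hK1 : 1 ≤ K := by
      rw [hKdef]
      have := abs_nonneg MA; have := abs_nonneg MA'; have := abs_nonneg lam
      linarith
    have hzero := ode_zero L hL φ' φ'' u'' hd2 hd3 hφ'cont hc2 K hK1
      (by
        intro x hx
        have hxI : x ∈ Icc (-L) L := Ioo_subset_Icc_self hx
        rw [hu''def]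
        simp only []
        have h1 : |A' x * φ' x + A x * φ'' x - lam * φ' x|
            ≤ |A' x| * |φ' x| + |A x| * |φ'' x| + |lam| * |φ' x| := by
          calc |A' x * φ' x + A x * φ'' x - lam * φ' x|
              ≤ |A' x * φ' x + A x * φ'' x| + |lam * φ' x| := by
                  rw [sub_eq_add_neg, ← abs_neg (lam * φ' x)]; exact abs_add_le _ _
            _ ≤ |A' x * φ' x| + |A x * φ'' x| + |lam * φ' x| := by
                have := abs_add_le (A' x * φ' x) (A x * φ'' x)
                linarith
            _ = |A' x| * |φ' x| + |A x| * |φ'' x| + |lam| * |φ' x| := by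
                rw [abs_mul, abs_mul, abs_mul]
        have h2 : |A' x| ≤ |MA'| := le_trans (by simpa [Real.norm_eq_abs] using hMA' x hxI)
          (le_abs_self _)
        have h3 : |A x| ≤ |MA| := le_trans (by simpa [Real.norm_eq_abs] using hMA x hxI)
          (le_abs_self _)
        have h4 : |φ' x| ≤ max |φ' x| |φ'' x| := le_max_left _ _
        have h5 : |φ'' x| ≤ max |φ' x| |φ'' x| := le_max_right _ _
        have h6 : (0:ℝ) ≤ max |φ' x| |φ'' x| := le_max_of_le_left (abs_nonneg _)
        rw [hKdef]
        nlinarith [abs_nonneg (A' x), abs_nonneg (A x), abs_nonneg lam,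
          abs_nonneg (φ' x), abs_nonneg (φ'' x), abs_nonneg MA, abs_nonneg MA'])
      t ht h.symm ht0
    exact hφconst hzero
  -- the exponent σ
  set σ : ℝ := max 1 (1/(2*(1-s))) with hσdef
  have hσ1 : (1:ℝ) ≤ σ := le_max_left _ _
  have hσpos : (0:ℝ) < σ := by linarith
  -- v = (φ')^σ and its derivatives
  set v : ℝ → ℝ := fun t => (φ' t) ^ σ with hvdef
  set v' : ℝ → ℝ := fun t => σ * (φ' t) ^ (σ - 1) * φ'' t with hv'def
  set v'' : ℝ → ℝ := fun t => σ * (σ-1) * (φ' t) ^ (σ - 2) * (φ'' t)^2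
      + σ * (φ' t) ^ (σ - 1) * u'' t with hv''def
  have hvd : ∀ t ∈ Icc (-L) L, HasDerivAt v (v' t) t := by
    intro t ht
    have h := (hd2 t ht).rpow_const (Or.inr hσ1)
    convert h using 1
    rw [hv'def]
    ring
  have hv'd : ∀ t ∈ Ioo (-L) L, HasDerivAt v' (v'' t) t := by
    intro t ht
    have hpos := upos t ht
    have h1 : HasDerivAt (fun t => (φ' t) ^ (σ-1)) (φ'' t * (σ-1) * (φ' t)^(σ-1-1)) t :=
      (hd2 t (Ioo_subset_Icc_self ht)).rpow_const (Or.inl hpos.ne')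
    have h3 := (h1.const_mul σ).mul (hd3 t ht)
    refine h3.congr_deriv (Eq.symm ?_)
    rw [hv''def, show σ - 1 - 1 = σ - 2 from by ring]
    ring
  have hrpow_cont : ∀ (p : ℝ), 0 ≤ p → ContinuousOn (fun t => (φ' t) ^ p) (Icc (-L) L) :=
    fun p hp => hφ'cont.rpow_const (fun t _ => Or.inr hp)
  have hvcont : ContinuousOn v (Icc (-L) L) := hrpow_cont σ (by linarith)
  have hv'cont : ContinuousOn v' (Icc (-L) L) :=
    (continuousOn_const.mul (hrpow_cont (σ-1) (by linarith))).mul hc2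
  have hv0L : v (-L) = 0 := by
    rw [hvdef]; simp only []
    rw [hNeu₁, Real.zero_rpow hσpos.ne']
  have hv0R : v L = 0 := by
    rw [hvdef]; simp only []
    rw [hNeu₂, Real.zero_rpow hσpos.ne']
  -- bounds for Poincaré
  obtain ⟨Cu, hCu⟩ := isCompact_Icc.exists_bound_of_continuousOn hc2
  obtain ⟨MU, hMU⟩ := isCompact_Icc.exists_bound_of_continuousOn hφ'cont
  have hCu0 : 0 ≤ Cu := le_trans (norm_nonneg _) (hCu 0 (Ioo_subset_Icc_self h0mem))
  have hMU0 : 0 ≤ MU := le_trans (norm_nonneg _) (hMU 0 (Ioo_subset_Icc_self h0mem))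
  set B : ℝ := MU + 1 with hBdef
  have hB0 : 0 < B := by linarith
  have hφ'B : ∀ t ∈ Icc (-L) L, φ' t ≤ B := by
    intro t ht
    have := hMU t ht
    rw [Real.norm_eq_abs] at this
    have := abs_le.1 this
    linarith [this.2]
  have hulin : ∀ t ∈ Icc (-L) L, φ' t ≤ (Cu+1) * (L - |t|) := by
    intro t ht
    rcases le_or_gt 0 t with h0 | h0
    · rw [abs_of_nonneg h0]
      rcases eq_or_lt_of_le ht.2 with h2 | h2
      · rw [h2, hNeu₂]
        simp
      · obtain ⟨c, hcmem, hcs⟩ := exists_hasDerivAt_eq_slope φ' φ'' h2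
          (hφ'cont.mono (Icc_subset_Icc (by linarith [ht.1]) le_rfl))
          (fun y hy => hd2 y ⟨by linarith [hy.1, ht.1], hy.2.le⟩)
        rw [hNeu₂] at hcs
        have hcI : c ∈ Icc (-L) L := ⟨by linarith [hcmem.1, ht.1], hcmem.2.le⟩
        have hb := hCu c hcI
        rw [Real.norm_eq_abs] at hb
        have hb2 := (abs_le.1 hb).1
        have hLt : (0:ℝ) < L - t := by linarith
        have heq : φ' t = -(φ'' c) * (L - t) := by
          have h5 : φ'' c * (L - t) = 0 - φ' t := by
            rw [hcs]
            field_simp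
          nlinarith [h5]
        rw [heq]
        nlinarith
    · rw [abs_of_neg h0]
      rcases eq_or_lt_of_le ht.1 with h2 | h2
      · rw [← h2, hNeu₁, neg_neg, sub_self, mul_zero]
      · obtain ⟨c, hcmem, hcs⟩ := exists_hasDerivAt_eq_slope φ' φ'' h2
          (hφ'cont.mono (Icc_subset_Icc le_rfl (by linarith [ht.2])))
          (fun y hy => hd2 y ⟨hy.1.le, by linarith [hy.2, ht.2]⟩)
        rw [hNeu₁] at hcs
        have hcI : c ∈ Icc (-L) L := ⟨hcmem.1.le, by linarith [hcmem.2, ht.2]⟩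
        have hb := hCu c hcI
        rw [Real.norm_eq_abs] at hb
        have hb2 := (abs_le.1 hb).2
        have hLt : (0:ℝ) < t - (-L) := by linarith
        have heq : φ' t = φ'' c * (t + L) := by
          have h5 : φ'' c * (t - (-L)) = φ' t - 0 := by
            rw [hcs]
            exact div_mul_cancel₀ _ hLt.ne'
          nlinarith [h5]
        rw [heq]
        nlinarith
  set C : ℝ := σ * B^(σ-1) * (Cu+1) with hCdef
  have hBσ : (0:ℝ) < B^(σ-1) := Real.rpow_pos_of_pos hB0 _
  have hC0 : 0 ≤ C := by positivity
  have hrpow_le : ∀ t ∈ Icc (-L) L, (φ' t)^(σ-1) ≤ B^(σ-1) := fun t ht =>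
    Real.rpow_le_rpow (hmono t ht) (hφ'B t ht) (by linarith)
  have hvb : ∀ t ∈ Icc (-L) L, |v t| ≤ C * (L - |t|) := by
    intro t ht
    have hLt : 0 ≤ L - |t| := by
      rcases le_or_gt 0 t with h0 | h0
      · rw [abs_of_nonneg h0]; linarith [ht.2]
      · rw [abs_of_neg h0]; linarith [ht.1]
    have h1 : |v t| = (φ' t)^σ := by
      rw [hvdef]
      exact abs_of_nonneg (Real.rpow_nonneg (hmono t ht) σ)
    rw [h1]
    have h2 : (φ' t)^σ = (φ' t)^(σ-1) * φ' t := by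
      rcases eq_or_lt_of_le (hmono t ht) with h3 | h3
      · rw [← h3, Real.zero_rpow hσpos.ne']
        ring
      · have h := Real.rpow_add_one h3.ne' (σ-1)
        rw [show σ - 1 + 1 = σ from by ring] at h
        exact h
    rw [h2]
    calc (φ' t)^(σ-1) * φ' t ≤ B^(σ-1) * ((Cu+1) * (L - |t|)) := by
          apply mul_le_mul (hrpow_le t ht) (hulin t ht) (hmono t ht) hBσ.le
      _ ≤ C * (L - |t|) := by
          rw [hCdef]
          have hX : 0 ≤ B^(σ-1) * ((Cu+1) * (L - |t|)) :=
            mul_nonneg hBσ.le (mul_nonneg (by linarith) hLt)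
          nlinarith [hX, hσ1]
  have hv'b : ∀ t ∈ Icc (-L) L, |v' t| ≤ C := by
    intro t ht
    have hb := hCu t ht
    rw [Real.norm_eq_abs] at hb
    have h1 : |v' t| = σ * (φ' t)^(σ-1) * |φ'' t| := by
      rw [hv'def]
      simp only []
      rw [abs_mul, abs_mul, abs_of_pos hσpos,
        abs_of_nonneg (Real.rpow_nonneg (hmono t ht) _)]
    rw [h1, hCdef]
    have h2 := hrpow_le t ht
    have hb2 := (abs_le.1 hb).2
    calc σ * (φ' t)^(σ-1) * |φ'' t| = σ * ((φ' t)^(σ-1) * |φ'' t|) := by ring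
      _ ≤ σ * (B^(σ-1) * (Cu+1)) := by
          apply mul_le_mul_of_nonneg_left _ hσpos.le
          have h4 : (φ' t)^(σ-1) * |φ'' t| ≤ B^(σ-1) * Cu :=
            mul_le_mul h2 hb (abs_nonneg _) hBσ.le
          nlinarith [hBσ]
      _ = σ * B^(σ-1) * (Cu+1) := by ring
  -- integrability of the continuous pieces
  have hIv2 : IntervalIntegrable (fun t => (v t)^2) volume (-L) L := by
    apply ContinuousOn.intervalIntegrable
    rw [uIcc_of_le hLL']; exact hvcont.pow 2
  have hIv'2 : IntervalIntegrable (fun t => (v' t)^2) volume (-L) L := by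
    apply ContinuousOn.intervalIntegrable
    rw [uIcc_of_le hLL']; exact hv'cont.pow 2
  have hIAvv' : IntervalIntegrable (fun t => A t * (v t * v' t)) volume (-L) L := by
    apply ContinuousOn.intervalIntegrable
    rw [uIcc_of_le hLL']; exact hAcont.mul (hvcont.mul hv'cont)
  have hIA'v2 : IntervalIntegrable (fun t => A' t * (v t)^2) volume (-L) L := by
    apply ContinuousOn.intervalIntegrable
    rw [uIcc_of_le hLL']; exact hA'cont.mul (hvcont.pow 2)
  set I1 : ℝ := ∫ t in (-L)..L, (v' t)^2 with hI1def
  set I2 : ℝ := ∫ t in (-L)..L, A t * (v t * v' t) with hI2def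
  set I3 : ℝ := ∫ t in (-L)..L, A' t * (v t)^2 with hI3def
  set I4 : ℝ := ∫ t in (-L)..L, (v t)^2 with hI4def
  -- FTC 1 : derivative of v v'
  have hFTC1 : (2*σ-1)/σ * I1 + I2 + σ * I3 - σ * lam * I4 = 0 := by
    have hint : IntervalIntegrable (fun t => (2*σ-1)/σ * (v' t)^2 + A t * (v t * v' t)
        + σ * (A' t * (v t)^2) - σ * lam * (v t)^2) volume (-L) L :=
      (((hIv'2.const_mul ((2*σ-1)/σ)).add hIAvv').add (hIA'v2.const_mul σ)).sub
        (hIv2.const_mul (σ * lam))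
    have hder : ∀ t ∈ Ioo (-L) L, HasDerivAt (fun t => v t * v' t)
        ((2*σ-1)/σ * (v' t)^2 + A t * (v t * v' t) + σ * (A' t * (v t)^2)
          - σ * lam * (v t)^2) t := by
      intro t ht
      have h := (hvd t (Ioo_subset_Icc_self ht)).mul (hv'd t ht)
      refine h.congr_deriv (Eq.symm ?_)
      have hpos := upos t ht
      have eσ : (φ' t)^σ = (φ' t)^(σ-1) * φ' t := by
        have h := Real.rpow_add_one hpos.ne' (σ-1)
        rw [show σ - 1 + 1 = σ from by ring] at h
        exact h
      have eσ1 : (φ' t)^(σ-1) = (φ' t)^(σ-2) * φ' t := by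
        have h := Real.rpow_add_one hpos.ne' (σ-2)
        rw [show σ - 2 + 1 = σ - 1 from by ring] at h
        exact h
      rw [hvdef, hv'def, hv''def, hu''def]
      simp only []
      rw [eσ, eσ1]
      field_simp
      ring
    have hcont : ContinuousOn (fun t => v t * v' t) (Icc (-L) L) := hvcont.mul hv'cont
    have h := integral_eq_sub_of_hasDerivAt_of_le hLL' hcont hder hint
    rw [hv0L, hv0R] at h
    simp only [zero_mul, sub_zero] at h
    -- h : ∫ (...) = 0
    rw [intervalIntegral.integral_sub (((hIv'2.const_mul ((2*σ-1)/σ)).add hIAvv').add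
        (hIA'v2.const_mul σ)) (hIv2.const_mul (σ * lam)),
      intervalIntegral.integral_add ((hIv'2.const_mul ((2*σ-1)/σ)).add hIAvv')
        (hIA'v2.const_mul σ),
      intervalIntegral.integral_add (hIv'2.const_mul ((2*σ-1)/σ)) hIAvv',
      intervalIntegral.integral_const_mul, intervalIntegral.integral_const_mul,
      intervalIntegral.integral_const_mul] at h
    rw [← hI1def, ← hI2def, ← hI3def, ← hI4def] at h
    linarith [h]
  -- FTC 2 : derivative of A v²
  have hFTC2 : I3 + 2 * I2 = 0 := by
    have hint : IntervalIntegrable (fun t => A' t * (v t)^2 + 2 * (A t * (v t * v' t)))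
        volume (-L) L := hIA'v2.add (hIAvv'.const_mul 2)
    have hder : ∀ t ∈ Ioo (-L) L, HasDerivAt (fun t => A t * (v t)^2)
        (A' t * (v t)^2 + 2 * (A t * (v t * v' t))) t := by
      intro t ht
      have htI : t ∈ Icc (-L) L := Ioo_subset_Icc_self ht
      have h := (hAd t htI).mul ((hvd t htI).pow 2)
      refine h.congr_deriv (Eq.symm ?_)
      push_cast [Pi.pow_apply]
      ring
    have hcont : ContinuousOn (fun t => A t * (v t)^2) (Icc (-L) L) :=
      hAcont.mul (hvcont.pow 2)
    have h := integral_eq_sub_of_hasDerivAt_of_le hLL' hcont hder hint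
    rw [hv0L, hv0R] at h
    rw [intervalIntegral.integral_add hIA'v2 (hIAvv'.const_mul 2),
      intervalIntegral.integral_const_mul] at h
    rw [← hI2def, ← hI3def] at h
    have hz : A L * 0^2 - A (-L) * 0^2 = 0 := by ring
    rw [hz] at h
    linarith [h]
  -- Poincaré inequality
  have hPoin : (π / (2*L))^2 * I4 ≤ I1 :=
    poincare L hL v v' hvcont hv'cont (fun t ht => hvd t (Ioo_subset_Icc_self ht))
      C hC0 hvb hv'b
  -- I3 ≥ K4 I4
  set K4 : ℝ := 2 * ((m:ℝ) - 1) * κ₂ + 4 * κ₁ with hK4def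
  have hm1 : (1:ℝ) ≤ (m:ℝ) := by exact_mod_cast hm
  have hK40 : 0 ≤ K4 := by rw [hK4def]; nlinarith
  have hI3K : K4 * I4 ≤ I3 := by
    have h := intervalIntegral.integral_mono_on hLL' (hIv2.const_mul K4) hIA'v2
      (fun t ht => by
        have hA'K : K4 ≤ A' t := by
          rw [hA'def, hK4def]
          simp only []
          nlinarith [sq_nonneg (Tk κ₂ t), sq_nonneg (Tk (4*κ₁) t)]
        exact mul_le_mul_of_nonneg_right hA'K (sq_nonneg _))
    rw [intervalIntegral.integral_const_mul] at h
    rw [← hI4def, ← hI3def] at h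
    exact h
  -- I4 > 0
  have hI4pos : 0 < I4 := by
    rw [hI4def]
    apply intervalIntegral_pos_of_pos_on hIv2 _ hLL
    intro x hx
    have := Real.rpow_pos_of_pos (upos x hx) σ
    rw [hvdef]
    positivity
  -- combine
  have hmain : σ * lam * I4 = (2*σ-1)/σ * I1 + (σ - 1/2) * I3 := by linarith
  have hc1 : 0 ≤ (2*σ-1)/σ := by
    apply div_nonneg _ hσpos.le
    linarith
  have hc2' : 0 ≤ σ - 1/2 := by linarith
  have hI1b : (π / (2*L))^2 * I4 ≤ I1 := hPoin
  have hlam : σ * lam * I4 ≥ ((2*σ-1)/σ * (π/(2*L))^2 + (σ - 1/2) * K4) * I4 := by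
    rw [hmain]
    have t1 : (2*σ-1)/σ * ((π/(2*L))^2 * I4) ≤ (2*σ-1)/σ * I1 :=
      mul_le_mul_of_nonneg_left hI1b hc1
    have t2 : (σ - 1/2) * (K4 * I4) ≤ (σ - 1/2) * I3 :=
      mul_le_mul_of_nonneg_left hI3K hc2'
    nlinarith [t1, t2]
  have hlam2 : (2*σ-1)/σ * (π/(2*L))^2 + (σ - 1/2) * K4 ≤ σ * lam := by
    have := le_of_mul_le_mul_right hlam hI4pos
    linarith
  -- final arithmetic
  have h2L : 2 * L = D := by rw [hLdef]; ring
  have hπD : (π/(2*L))^2 = π^2 / D^2 := by rw [h2L]; ring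
  rw [hπD] at hlam2
  have hπpos : (0:ℝ) < π^2 / D^2 := by
    have := Real.pi_pos
    positivity
  have hgoal := final_arith s σ K4 lam (π^2/D^2) hs.1 hs.2 hσdef hK40 hπpos hlam2
  calc 4 * s * (1 - s) * π ^ 2 / D ^ 2 + 2 * s * ((m:ℝ) - 1) * κ₂ + 4 * s * κ₁
      = 4*s*(1-s)*(π^2/D^2) + s*K4 := by rw [hK4def]; ring
    _ ≤ lam := hgoal
end

section
/- Let $m \geq 2$ be an integer, $\kappa \geq 0$ a real number, and $D>0$ with $\sqrt{\kappa}\,D < \pi/2$. Suppose $\lambda \in \mathbb{R}$ and $\varphi$ is a twice continuously differentiable real-valued function on $[-D/2,D/2]$ satisfying $\varphi''(t)-\big(4(m-1)T_{\kappa}(t)+3T_{4\kappa}(t)\big)\varphi'(t)=-\lambda\varphi(t)$ for all $t\in[-D/2,D/2]$, with Neumann boundary conditions $\varphi'(-D/2)=\varphi'(D/2)=0$, and such that $\varphi' \geq 0$ on $[-D/2,D/2]$ and $\varphi$ is not constant. Then for every $s\in(0,1)$, $\lambda \geq 4s(1-s)\frac{\pi^2}{D^2} + 4s(m+2)\kappa$.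 -/
open Real Set

open MeasureTheory

lemma hasDerivAt_ctan (c t : ℝ) (h : Real.cos (c * t) ≠ 0) :
    HasDerivAt (fun u => c * Real.tan (c * u)) (c ^ 2 + (c * Real.tan (c * t)) ^ 2) t := by
  have h1 : HasDerivAt (fun u : ℝ => c * u) c t := by
    simpa using (hasDerivAt_id t).const_mul c
  have h2 : HasDerivAt (fun u => Real.tan (c * u)) (1 / Real.cos (c * t) ^ 2 * c) t :=
    (Real.hasDerivAt_tan h).comp t h1
  have h3 := h2.const_mul c
  refine h3.congr_deriv ?_
  symm
  have hs : Real.sin (c*t) ^ 2 + Real.cos (c*t) ^ 2 = 1 := Real.sin_sq_add_cos_sq _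
  rw [Real.tan_eq_sin_div_cos]
  field_simp
  nlinarith [hs]

lemma sqrt_four_mul (κ : ℝ) (hκ : 0 ≤ κ) : Real.sqrt (4*κ) = 2 * Real.sqrt κ := by
  rw [show (4:ℝ)*κ = 2^2*κ by ring, Real.sqrt_mul (by positivity), Real.sqrt_sq (by norm_num)]

lemma Tk_hasDeriv (κ t : ℝ) (hκ : 0 ≤ κ) (h : Real.cos (Real.sqrt κ * t) ≠ 0) :
    HasDerivAt (Tk κ) (κ + (Tk κ t)^2) t := by
  unfold Tk
  convert hasDerivAt_ctan (Real.sqrt κ) t h using 2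
  rw [Real.sq_sqrt hκ]

lemma Tk4_hasDeriv (κ t : ℝ) (hκ : 0 ≤ κ) (h : Real.cos (2 * Real.sqrt κ * t) ≠ 0) :
    HasDerivAt (Tk (4*κ)) (4*κ + (Tk (4*κ) t)^2) t := by
  have h4 := sqrt_four_mul κ hκ
  unfold Tk
  rw [h4]
  convert hasDerivAt_ctan (2 * Real.sqrt κ) t h using 2
  rw [mul_pow, Real.sq_sqrt hκ]; norm_num

noncomputable def bfun (m : ℕ) (κ t : ℝ) : ℝ := 4 * ((m:ℝ) - 1) * Tk κ t + 3 * Tk (4*κ) t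

noncomputable def bfun' (m : ℕ) (κ t : ℝ) : ℝ :=
  4 * ((m:ℝ) - 1) * (κ + (Tk κ t)^2) + 3 * (4*κ + (Tk (4*κ) t)^2)

noncomputable def rfun (m : ℕ) (κ t : ℝ) : ℝ :=
  Real.cos (Real.sqrt κ * t) ^ (4*(m-1)) * Real.cos (2 * Real.sqrt κ * t) ^ 3

noncomputable def Gf (m : ℕ) (κ s θ u : ℝ) : ℝ :=
  -(4*s*(1-s)) * (θ * Real.tan (θ*u)) + (1-s) * bfun m κ u

noncomputable def Gf' (m : ℕ) (κ s θ u : ℝ) : ℝ :=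
  -(4*s*(1-s)) * (θ^2 + (θ * Real.tan (θ*u))^2) + (1-s) * bfun' m κ u

noncomputable def Phi (m : ℕ) (κ s θ lam : ℝ) (φ φ' : ℝ → ℝ) (u : ℝ) : ℝ :=
  rfun m κ u * ((bfun m κ u * φ' u - lam * φ u) * φ' u - Gf m κ s θ u * φ' u ^ 2)

noncomputable def Psi (m : ℕ) (κ s θ lam : ℝ) (φ φ' φ'' : ℝ → ℝ) (u : ℝ) : ℝ :=
  (-(bfun m κ u) * rfun m κ u) * ((bfun m κ u * φ' u - lam * φ u) * φ' u - Gf m κ s θ u * φ' u ^ 2)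
    + rfun m κ u * ((bfun' m κ u * φ' u + bfun m κ u * φ'' u - lam * φ' u) * φ' u
        + (bfun m κ u * φ' u - lam * φ u) * φ'' u
        - (Gf' m κ s θ u * φ' u ^ 2 + Gf m κ s θ u * (2 * φ' u ^ 1 * φ'' u)))

lemma bfun_hasDeriv (m : ℕ) (κ t : ℝ) (hκ : 0 ≤ κ)
    (h1 : Real.cos (Real.sqrt κ * t) ≠ 0) (h2 : Real.cos (2 * Real.sqrt κ * t) ≠ 0) :
    HasDerivAt (bfun m κ) (bfun' m κ t) t := by
  unfold bfun bfun'
  exact ((Tk_hasDeriv κ t hκ h1).const_mul _).add ((Tk4_hasDeriv κ t hκ h2).const_mul _)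

lemma rfun_deriv (m : ℕ) (hm : 2 ≤ m) (κ t : ℝ) (hκ : 0 ≤ κ)
    (h1 : Real.cos (Real.sqrt κ * t) ≠ 0) (h2 : Real.cos (2 * Real.sqrt κ * t) ≠ 0) :
    HasDerivAt (rfun m κ) (-(bfun m κ t) * rfun m κ t) t := by
  have h4 := sqrt_four_mul κ hκ
  have hc1 : HasDerivAt (fun u : ℝ => Real.cos (Real.sqrt κ * u))
      (-Real.sin (Real.sqrt κ * t) * Real.sqrt κ) t := by
    have := (Real.hasDerivAt_cos (Real.sqrt κ * t)).comp t
      (by simpa using (hasDerivAt_id t).const_mul (Real.sqrt κ) :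
        HasDerivAt (fun u : ℝ => Real.sqrt κ * u) (Real.sqrt κ) t)
    exact this
  have hc2 : HasDerivAt (fun u : ℝ => Real.cos (2 * Real.sqrt κ * u))
      (-Real.sin (2 * Real.sqrt κ * t) * (2 * Real.sqrt κ)) t := by
    have := (Real.hasDerivAt_cos (2 * Real.sqrt κ * t)).comp t
      (by simpa using (hasDerivAt_id t).const_mul (2 * Real.sqrt κ) :
        HasDerivAt (fun u : ℝ => 2 * Real.sqrt κ * u) (2 * Real.sqrt κ) t)
    exact this
  obtain ⟨k, hk⟩ : ∃ k, 4*(m-1) = k+1 := ⟨4*(m-1)-1, by omega⟩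
  have h := (hc1.pow (4*(m-1))).mul (hc2.pow 3)
  refine h.congr_deriv ?_
  symm
  simp only [Pi.pow_apply]
  have hcast : ((k:ℝ) + 1) = 4*((m:ℝ)-1) := by
    have : ((4*(m-1) : ℕ) : ℝ) = 4*((m:ℝ)-1) := by
      push_cast [Nat.cast_sub (by omega : 1 ≤ m)]; ring
    rw [← this, hk]; push_cast; ring
  unfold bfun rfun Tk
  rw [hk, h4]
  rw [Real.tan_eq_sin_div_cos, Real.tan_eq_sin_div_cos]
  simp only [Nat.add_sub_cancel]
  push_cast
  rw [← hcast]
  field_simp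
  have h2' : Real.cos (Real.sqrt κ * t * 2) * (Real.cos (Real.sqrt κ * t * 2))⁻¹ = 1 :=
    mul_inv_cancel₀ (by rw [mul_comm, ← mul_assoc]; exact h2)
  linear_combination (-6 * Real.sqrt κ * Real.cos (Real.sqrt κ * t * 2) ^ 2
    * Real.cos (Real.sqrt κ * t) ^ 2 * Real.cos (Real.sqrt κ * t) ^ k
    * Real.sin (Real.sqrt κ * t * 2)) * h2'

lemma key_scalar (s θ u v d M κ : ℝ) (hs0 : 0 < s) (hs1 : s < 1)
    (hd : 4*(M+2)*κ ≤ d) :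
    4*s*(1-s)*θ^2 + 4*s*(M+2)*κ
      ≤ v * (-(4*s*(1-s)) * (θ*u) + (1-s)*v)
        - (-(4*s*(1-s)) * (θ^2 + (θ*u)^2) + (1-s)*d)
        - (-(4*s*(1-s)) * (θ*u) + (1-s)*v)^2 + d := by
  have h1 : 0 ≤ (4*s*(1-s)) * ((1-2*s)*(θ*u) + v/2)^2 :=
    mul_nonneg (by nlinarith) (sq_nonneg _)
  have h2 : 0 ≤ s * (d - 4*(M+2)*κ) := mul_nonneg hs0.le (by linarith)
  nlinarith [h1, h2]

/-- The pointwise inequality for the derivative of `Phi`. -/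
lemma Psi_key (m : ℕ) (hm : 2 ≤ m) (κ s θ lam : ℝ) (hκ : 0 ≤ κ)
    (hs0 : 0 < s) (hs1 : s < 1)
    (φ φ' φ'' : ℝ → ℝ) (t : ℝ)
    (hO : φ'' t = bfun m κ t * φ' t - lam * φ t)
    (hρ : 0 < rfun m κ t) :
    (4*s*(1-s)*θ^2 + 4*s*((m:ℝ)+2)*κ - lam) * (rfun m κ t * φ' t ^ 2)
      ≤ Psi m κ s θ lam φ φ' φ'' t := by
  have hb'low : 4*((m:ℝ)+2)*κ ≤ bfun' m κ t := by
    have hm' : (2:ℝ) ≤ (m:ℝ) := by exact_mod_cast hm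
    unfold bfun'
    nlinarith [sq_nonneg (Tk κ t), sq_nonneg (Tk (4*κ) t)]
  have hscalar : 4*s*(1-s)*θ^2 + 4*s*((m:ℝ)+2)*κ
      ≤ bfun m κ t * Gf m κ s θ t - Gf' m κ s θ t - (Gf m κ s θ t)^2 + bfun' m κ t := by
    have hks := key_scalar s θ (Real.tan (θ*t)) (bfun m κ t) (bfun' m κ t) ((m:ℝ)) κ
      hs0 hs1 hb'low
    unfold Gf Gf'
    nlinarith [hks]
  have e2 : Psi m κ s θ lam φ φ' φ'' t
      = (4*s*(1-s)*θ^2 + 4*s*((m:ℝ)+2)*κ - lam) * (rfun m κ t * φ' t ^ 2)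
        + rfun m κ t * (((bfun m κ t * φ' t - lam * φ t) - Gf m κ s θ t * φ' t)^2
          + (bfun m κ t * Gf m κ s θ t - Gf' m κ s θ t - (Gf m κ s θ t)^2 + bfun' m κ t
              - (4*s*(1-s)*θ^2 + 4*s*((m:ℝ)+2)*κ)) * φ' t ^ 2) := by
    unfold Psi
    rw [hO]
    ring
  have hnn : 0 ≤ rfun m κ t * (((bfun m κ t * φ' t - lam * φ t) - Gf m κ s θ t * φ' t)^2
      + (bfun m κ t * Gf m κ s θ t - Gf' m κ s θ t - (Gf m κ s θ t)^2 + bfun' m κ t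
          - (4*s*(1-s)*θ^2 + 4*s*((m:ℝ)+2)*κ)) * φ' t ^ 2) :=
    mul_nonneg hρ.le (add_nonneg (sq_nonneg _) (mul_nonneg (by linarith) (sq_nonneg _)))
  linarith [e2.le, e2.ge]

/-- `Phi` has derivative `Psi` at points where everything is differentiable. -/
lemma Phi_hasDeriv (m : ℕ) (hm : 2 ≤ m) (κ s θ lam : ℝ) (hκ : 0 ≤ κ)
    (φ φ' φ'' : ℝ → ℝ) (t : ℝ)
    (hco1 : Real.cos (Real.sqrt κ * t) ≠ 0) (hco2 : Real.cos (2 * Real.sqrt κ * t) ≠ 0)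
    (hcoθ : Real.cos (θ * t) ≠ 0)
    (hdφ : HasDerivAt φ (φ' t) t) (hdφ' : HasDerivAt φ' (φ'' t) t) :
    HasDerivAt (Phi m κ s θ lam φ φ') (Psi m κ s θ lam φ φ' φ'' t) t := by
  have hb := bfun_hasDeriv m κ t hκ hco1 hco2
  have hρ := rfun_deriv m hm κ t hκ hco1 hco2
  have htan := hasDerivAt_ctan θ t hcoθ
  have hGd : HasDerivAt (Gf m κ s θ) (Gf' m κ s θ t) t := by
    unfold Gf Gf'
    exact (htan.const_mul (-(4*s*(1-s)))).add (hb.const_mul (1-s))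
  have hBd : HasDerivAt (fun u => bfun m κ u * φ' u - lam * φ u)
      (bfun' m κ t * φ' t + bfun m κ t * φ'' t - lam * φ' t) t :=
    (hb.mul hdφ').sub (hdφ.const_mul lam)
  have hw2 : HasDerivAt (fun u => φ' u ^ 2) (2 * φ' t ^ 1 * φ'' t) t := hdφ'.pow 2
  have hin := (hBd.mul hdφ').sub (hGd.mul hw2)
  have h := hρ.mul hin
  unfold Phi Psi
  exact h

/-- Continuity of `Psi` on the interval. -/
lemma Psi_cont (m : ℕ) (hm : 2 ≤ m) (κ s θ lam : ℝ) (hκ : 0 ≤ κ)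
    (φ φ' φ'' : ℝ → ℝ) (I : Set ℝ)
    (hcos : ∀ t ∈ I, Real.cos (Real.sqrt κ * t) ≠ 0 ∧ Real.cos (2 * Real.sqrt κ * t) ≠ 0
      ∧ Real.cos (θ * t) ≠ 0)
    (hφc : ContinuousOn φ I) (hφ'c : ContinuousOn φ' I) (hφ''c : ContinuousOn φ'' I) :
    ContinuousOn (Psi m κ s θ lam φ φ' φ'') I := by
  have hTkc : ContinuousOn (Tk κ) I := fun t ht =>
    ((Tk_hasDeriv κ t hκ (hcos t ht).1).continuousAt).continuousWithinAt
  have hTk4c : ContinuousOn (Tk (4*κ)) I := fun t ht =>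
    ((Tk4_hasDeriv κ t hκ (hcos t ht).2.1).continuousAt).continuousWithinAt
  have htanc : ContinuousOn (fun u => θ * Real.tan (θ*u)) I := fun t ht =>
    ((hasDerivAt_ctan θ t (hcos t ht).2.2).continuousAt).continuousWithinAt
  have hrc : ContinuousOn (rfun m κ) I := fun t ht =>
    ((rfun_deriv m hm κ t hκ (hcos t ht).1 (hcos t ht).2.1).continuousAt).continuousWithinAt
  have hbc : ContinuousOn (bfun m κ) I := fun t ht =>
    ((bfun_hasDeriv m κ t hκ (hcos t ht).1 (hcos t ht).2.1).continuousAt).continuousWithinAt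
  have hb'c : ContinuousOn (bfun' m κ) I := by
    unfold bfun'
    exact (continuousOn_const.mul (continuousOn_const.add (hTkc.pow 2))).add
      (continuousOn_const.mul (continuousOn_const.add (hTk4c.pow 2)))
  have hGc : ContinuousOn (Gf m κ s θ) I := by
    unfold Gf
    exact (continuousOn_const.mul htanc).add (continuousOn_const.mul hbc)
  have hG'c : ContinuousOn (Gf' m κ s θ) I := by
    unfold Gf'
    exact (continuousOn_const.mul (continuousOn_const.add (htanc.pow 2))).add
      (continuousOn_const.mul hb'c)
  have hBfc : ContinuousOn (fun u => bfun m κ u * φ' u - lam * φ u) I :=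
    (hbc.mul hφ'c).sub (continuousOn_const.mul hφc)
  unfold Psi
  apply ContinuousOn.add
  · exact (hbc.neg.mul hrc).mul ((hBfc.mul hφ'c).sub (hGc.mul (hφ'c.pow 2)))
  · exact hrc.mul (((((hb'c.mul hφ'c).add (hbc.mul hφ''c)).sub
      (continuousOn_const.mul hφ'c)).mul hφ'c).add (hBfc.mul hφ''c) |>.sub
      ((hG'c.mul (hφ'c.pow 2)).add (hGc.mul ((continuousOn_const.mul (hφ'c.pow 1)).mul hφ''c))))

set_option maxHeartbeats 1000000 in
theorem aux_theta (m : ℕ) (hm : 2 ≤ m)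
    (κ : ℝ) (hκ : 0 ≤ κ) (D : ℝ) (hD : 0 < D)
    (hDκ : Real.sqrt κ * D < Real.pi / 2)
    (lam : ℝ) (φ φ' φ'' : ℝ → ℝ)
    (hd1 : ∀ t ∈ Icc (-(D / 2)) (D / 2), HasDerivAt φ (φ' t) t)
    (hd2 : ∀ t ∈ Icc (-(D / 2)) (D / 2), HasDerivAt φ' (φ'' t) t)
    (hc2 : ContinuousOn φ'' (Icc (-(D / 2)) (D / 2)))
    (hODE : ∀ t ∈ Icc (-(D / 2)) (D / 2),
      φ'' t - (4 * ((m : ℝ) - 1) * Tk κ t + 3 * Tk (4 * κ) t) * φ' t = -lam * φ t)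
    (hNeu₁ : φ' (-(D / 2)) = 0) (hNeu₂ : φ' (D / 2) = 0)
    (hnonconst : ¬ ∀ t ∈ Icc (-(D / 2)) (D / 2), φ t = φ (-(D / 2)))
    (s θ : ℝ) (hs0 : 0 < s) (hs1 : s < 1) (hθ0 : 0 < θ) (hθp : θ < Real.pi / D) :
    4*s*(1-s)*θ^2 + 4*s*((m:ℝ)+2)*κ ≤ lam := by
  have hπ := Real.pi_pos
  have ha : 0 < D/2 := by linarith
  have haa : -(D/2) ≤ (D/2) := by linarith
  have hsq : 0 ≤ Real.sqrt κ := Real.sqrt_nonneg κ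
  -- cosine positivity on the interval
  have hcos : ∀ t ∈ Icc (-(D/2)) (D/2), 0 < Real.cos (Real.sqrt κ * t)
      ∧ 0 < Real.cos (2*Real.sqrt κ * t) ∧ 0 < Real.cos (θ * t) := by
    intro t ht
    rw [mem_Icc] at ht
    have h1 : Real.sqrt κ * t ≤ Real.sqrt κ * (D/2) := by nlinarith
    have h2 : -(Real.sqrt κ * (D/2)) ≤ Real.sqrt κ * t := by nlinarith
    have hb : Real.sqrt κ * (D/2) < π/2 := by nlinarith
    have hθt1 : θ * t ≤ θ * (D/2) := by nlinarith
    have hθt2 : -(θ * (D/2)) ≤ θ * t := by nlinarith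
    have hθb : θ * (D/2) < π/2 := by
      have h3 : θ * (D/2) < (π/D) * (D/2) := by nlinarith
      calc θ * (D/2) < (π/D)*(D/2) := h3
        _ = π/2 := by field_simp
    refine ⟨Real.cos_pos_of_mem_Ioo ⟨by linarith, by linarith⟩,
      Real.cos_pos_of_mem_Ioo ⟨by nlinarith, by nlinarith⟩,
      Real.cos_pos_of_mem_Ioo ⟨by linarith, by linarith⟩⟩
  have hρpos : ∀ t ∈ Icc (-(D/2)) (D/2), 0 < rfun m κ t := by
    intro t ht
    obtain ⟨hco1, hco2, -⟩ := hcos t ht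
    unfold rfun
    exact mul_pos (pow_pos hco1 _) (pow_pos hco2 _)
  -- derivative of Phi is Psi on the interval
  have hderiv : ∀ t ∈ Icc (-(D/2)) (D/2),
      HasDerivAt (Phi m κ s θ lam φ φ') (Psi m κ s θ lam φ φ' φ'' t) t := by
    intro t ht
    obtain ⟨hco1, hco2, hcoθ⟩ := hcos t ht
    exact Phi_hasDeriv m hm κ s θ lam hκ φ φ' φ'' t hco1.ne' hco2.ne' hcoθ.ne'
      (hd1 t ht) (hd2 t ht)
  -- continuity facts
  have hφ'c : ContinuousOn φ' (Icc (-(D/2)) (D/2)) := fun t ht =>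
    (hd2 t ht).continuousAt.continuousWithinAt
  have hΨc : ContinuousOn (Psi m κ s θ lam φ φ' φ'') (Icc (-(D/2)) (D/2)) :=
    Psi_cont m hm κ s θ lam hκ φ φ' φ''
      (Icc (-(D/2)) (D/2))
      (fun t ht => ⟨(hcos t ht).1.ne', (hcos t ht).2.1.ne', (hcos t ht).2.2.ne'⟩)
      (fun t ht => (hd1 t ht).continuousAt.continuousWithinAt) hφ'c hc2
  have hrc : ContinuousOn (rfun m κ) (Icc (-(D/2)) (D/2)) := fun t ht =>
    ((rfun_deriv m hm κ t hκ (hcos t ht).1.ne' (hcos t ht).2.1.ne').continuousAt).continuousWithinAt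
  -- pointwise key inequality
  have hkey : ∀ t ∈ Icc (-(D/2)) (D/2),
      (fun u => (4*s*(1-s)*θ^2 + 4*s*((m:ℝ)+2)*κ - lam) * (rfun m κ u * φ' u ^ 2)) t
        ≤ Psi m κ s θ lam φ φ' φ'' t := by
    intro t ht
    have hO : φ'' t = bfun m κ t * φ' t - lam * φ t := by
      have h := hODE t ht; unfold bfun; linarith
    exact Psi_key m hm κ s θ lam hκ hs0 hs1 φ φ' φ'' t hO (hρpos t ht)
  -- FTC
  have huIcc : uIcc (-(D/2)) (D/2) = Icc (-(D/2)) (D/2) := uIcc_of_le haa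
  have hΨint : IntervalIntegrable (Psi m κ s θ lam φ φ' φ'') volume (-(D/2)) (D/2) :=
    (huIcc ▸ hΨc).intervalIntegrable
  have hΦa : Phi m κ s θ lam φ φ' (D/2) = 0 := by unfold Phi; rw [hNeu₂]; ring
  have hΦb : Phi m κ s θ lam φ φ' (-(D/2)) = 0 := by unfold Phi; rw [hNeu₁]; ring
  have hFTC : ∫ u in (-(D/2))..(D/2), Psi m κ s θ lam φ φ' φ'' u = 0 := by
    rw [intervalIntegral.integral_eq_sub_of_hasDerivAt
      (fun t ht => hderiv t (huIcc ▸ ht)) hΨint, hΦa, hΦb]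
    ring
  -- integral comparison
  have hfc : ContinuousOn (fun u => rfun m κ u * φ' u ^ 2) (Icc (-(D/2)) (D/2)) :=
    hrc.mul (hφ'c.pow 2)
  have hfint : IntervalIntegrable (fun u => rfun m κ u * φ' u ^ 2) volume (-(D/2)) (D/2) :=
    (huIcc ▸ hfc).intervalIntegrable
  have hcfint : IntervalIntegrable
      (fun u => (4*s*(1-s)*θ^2 + 4*s*((m:ℝ)+2)*κ - lam) * (rfun m κ u * φ' u ^ 2))
      volume (-(D/2)) (D/2) := hfint.const_mul _
  have hmono := intervalIntegral.integral_mono_on haa hcfint hΨint hkey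
  rw [hFTC, intervalIntegral.integral_const_mul] at hmono
  -- positivity of ∫ ρ (φ')²
  have hex : ∃ t₀ ∈ Icc (-(D/2)) (D/2), φ' t₀ ≠ 0 := by
    by_contra hno
    push_neg at hno
    refine hnonconst (fun t ht => ?_)
    refine constant_of_has_deriv_right_zero
      (fun u hu => (hd1 u hu).continuousAt.continuousWithinAt) (fun x hx => ?_) t ht
    have h := (hd1 x (Ico_subset_Icc_self hx)).hasDerivWithinAt (s := Ici x)
    rwa [hno x (Ico_subset_Icc_self hx)] at h
  obtain ⟨t₀, ht₀, hw0⟩ := hex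
  have ht₀m : -(D/2) ≤ t₀ ∧ t₀ ≤ D/2 := mem_Icc.1 ht₀
  have hft₀ : 0 < rfun m κ t₀ * φ' t₀ ^ 2 := by
    have h : 0 < φ' t₀ ^ 2 := by rcases lt_or_gt_of_ne hw0 with h|h <;> nlinarith
    exact mul_pos (hρpos t₀ ht₀) h
  have hev : ∀ᶠ x in nhdsWithin t₀ (Icc (-(D/2)) (D/2)),
      rfun m κ t₀ * φ' t₀ ^ 2 / 2 < rfun m κ x * φ' x ^ 2 :=
    (hfc t₀ ht₀).eventually (eventually_gt_nhds (by linarith))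
  obtain ⟨δ, hδ0, hδ⟩ := Metric.mem_nhdsWithin_iff.1 hev
  have hu₁le : -(D/2) ≤ max (t₀ - δ/2) (-(D/2)) := le_max_right _ _
  have hv₁le : min (t₀ + δ/2) (D/2) ≤ D/2 := min_le_right _ _
  have hu₁le' : max (t₀ - δ/2) (-(D/2)) ≤ D/2 := max_le (by linarith [ht₀m.2]) haa
  have hv₁le' : -(D/2) ≤ min (t₀ + δ/2) (D/2) := le_min (by linarith [ht₀m.1]) haa
  have huv : max (t₀ - δ/2) (-(D/2)) < min (t₀ + δ/2) (D/2) := by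
    simp only [lt_min_iff, max_lt_iff]
    refine ⟨⟨by linarith, by linarith [ht₀m.1]⟩, ⟨by linarith [ht₀m.2], by linarith⟩⟩
  have hsubI : Icc (max (t₀ - δ/2) (-(D/2))) (min (t₀ + δ/2) (D/2)) ⊆ Icc (-(D/2)) (D/2) :=
    Icc_subset_Icc hu₁le hv₁le
  have hball : ∀ x ∈ Icc (max (t₀ - δ/2) (-(D/2))) (min (t₀ + δ/2) (D/2)),
      rfun m κ t₀ * φ' t₀ ^ 2 / 2 ≤ rfun m κ x * φ' x ^ 2 := by
    intro x hx
    have h1 : t₀ - δ/2 ≤ x := le_trans (le_max_left _ _) hx.1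
    have h2 : x ≤ t₀ + δ/2 := le_trans hx.2 (min_le_left _ _)
    refine (hδ ⟨?_, hsubI hx⟩).le
    rw [Metric.mem_ball, Real.dist_eq, abs_sub_lt_iff]
    constructor <;> linarith
  have hIf : ∀ x ∈ Icc (-(D/2)) (D/2), 0 ≤ rfun m κ x * φ' x ^ 2 := fun x hx =>
    mul_nonneg (hρpos x hx).le (sq_nonneg _)
  have hintuv : IntervalIntegrable (fun u => rfun m κ u * φ' u ^ 2) volume
      (max (t₀ - δ/2) (-(D/2))) (min (t₀ + δ/2) (D/2)) :=
    (hfc.mono (by rw [uIcc_of_le huv.le]; exact hsubI)).intervalIntegrable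
  have hint1 : IntervalIntegrable (fun u => rfun m κ u * φ' u ^ 2) volume
      (-(D/2)) (max (t₀ - δ/2) (-(D/2))) :=
    (hfc.mono (by rw [uIcc_of_le hu₁le]; exact Icc_subset_Icc le_rfl hu₁le')).intervalIntegrable
  have hint1v : IntervalIntegrable (fun u => rfun m κ u * φ' u ^ 2) volume
      (-(D/2)) (min (t₀ + δ/2) (D/2)) :=
    (hfc.mono (by rw [uIcc_of_le hv₁le']; exact Icc_subset_Icc le_rfl hv₁le)).intervalIntegrable
  have hint3 : IntervalIntegrable (fun u => rfun m κ u * φ' u ^ 2) volume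
      (min (t₀ + δ/2) (D/2)) (D/2) :=
    (hfc.mono (by rw [uIcc_of_le hv₁le]; exact Icc_subset_Icc hv₁le' le_rfl)).intervalIntegrable
  have hlow : (min (t₀ + δ/2) (D/2) - max (t₀ - δ/2) (-(D/2))) * (rfun m κ t₀ * φ' t₀ ^ 2 / 2)
      ≤ ∫ x in (max (t₀ - δ/2) (-(D/2)))..(min (t₀ + δ/2) (D/2)), rfun m κ x * φ' x ^ 2 := by
    have h := intervalIntegral.integral_mono_on huv.le intervalIntegrable_const hintuv hball
    rwa [intervalIntegral.integral_const, smul_eq_mul] at h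
  have hsplit1 : (∫ x in (-(D/2))..(max (t₀ - δ/2) (-(D/2))), rfun m κ x * φ' x ^ 2)
      + (∫ x in (max (t₀ - δ/2) (-(D/2)))..(min (t₀ + δ/2) (D/2)), rfun m κ x * φ' x ^ 2)
      = ∫ x in (-(D/2))..(min (t₀ + δ/2) (D/2)), rfun m κ x * φ' x ^ 2 :=
    intervalIntegral.integral_add_adjacent_intervals hint1 hintuv
  have hsplit2 : (∫ x in (-(D/2))..(min (t₀ + δ/2) (D/2)), rfun m κ x * φ' x ^ 2)
      + (∫ x in (min (t₀ + δ/2) (D/2))..(D/2), rfun m κ x * φ' x ^ 2)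
      = ∫ x in (-(D/2))..(D/2), rfun m κ x * φ' x ^ 2 :=
    intervalIntegral.integral_add_adjacent_intervals hint1v hint3
  have hn1 : 0 ≤ ∫ x in (-(D/2))..(max (t₀ - δ/2) (-(D/2))), rfun m κ x * φ' x ^ 2 :=
    intervalIntegral.integral_nonneg hu₁le
      (fun x hx => hIf x ⟨hx.1, le_trans hx.2 hu₁le'⟩)
  have hn3 : 0 ≤ ∫ x in (min (t₀ + δ/2) (D/2))..(D/2), rfun m κ x * φ' x ^ 2 :=
    intervalIntegral.integral_nonneg hv₁le
      (fun x hx => hIf x ⟨le_trans hv₁le' hx.1, hx.2⟩)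
  have hJpos : 0 < ∫ x in (-(D/2))..(D/2), rfun m κ x * φ' x ^ 2 := by
    have hpos : 0 < (min (t₀ + δ/2) (D/2) - max (t₀ - δ/2) (-(D/2)))
        * (rfun m κ t₀ * φ' t₀ ^ 2 / 2) := mul_pos (by linarith) (by linarith)
    linarith
  -- conclude
  by_contra hcon
  push_neg at hcon
  have hpos2 : 0 < (4*s*(1-s)*θ^2 + 4*s*((m:ℝ)+2)*κ - lam) *
      ∫ x in (-(D/2))..(D/2), rfun m κ x * φ' x ^ 2 := mul_pos (by linarith) hJpos
  linarith

/-- **Proposition 1.2.** Explicit lower bound for the one-dimensional comparison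
eigenvalue arising in the quaternion-Kähler setting: any nonconstant monotone
Neumann eigenfunction of `φ'' - (4(m-1)T_κ + 3T_{4κ}) φ' = -λ φ` on `[-D/2, D/2]`
has eigenvalue `λ ≥ 4s(1-s)π²/D² + 4s(m+2)κ` for every `s ∈ (0,1)`. -/
theorem prop_1_2 (m : ℕ) (hm : 2 ≤ m)
    (κ : ℝ) (hκ : 0 ≤ κ) (D : ℝ) (hD : 0 < D)
    (hDκ : Real.sqrt κ * D < Real.pi / 2)
    (lam : ℝ) (φ φ' φ'' : ℝ → ℝ)
    (hd1 : ∀ t ∈ Icc (-(D / 2)) (D / 2), HasDerivAt φ (φ' t) t)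
    (hd2 : ∀ t ∈ Icc (-(D / 2)) (D / 2), HasDerivAt φ' (φ'' t) t)
    (hc2 : ContinuousOn φ'' (Icc (-(D / 2)) (D / 2)))
    (hODE : ∀ t ∈ Icc (-(D / 2)) (D / 2),
      φ'' t - (4 * ((m : ℝ) - 1) * Tk κ t + 3 * Tk (4 * κ) t) * φ' t = -lam * φ t)
    (hNeu₁ : φ' (-(D / 2)) = 0) (hNeu₂ : φ' (D / 2) = 0)
    (hmono : ∀ t ∈ Icc (-(D / 2)) (D / 2), 0 ≤ φ' t)
    (hnonconst : ¬ ∀ t ∈ Icc (-(D / 2)) (D / 2), φ t = φ (-(D / 2))) :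
    ∀ s ∈ Ioo (0 : ℝ) 1,
      4 * s * (1 - s) * Real.pi ^ 2 / D ^ 2 + 4 * s * ((m : ℝ) + 2) * κ ≤ lam := by
  intro s hs
  obtain ⟨hs0, hs1⟩ := hs
  have hπ := Real.pi_pos
  have hp : 0 < π / D := by positivity
  have H : ∀ θ : ℝ, 0 < θ → θ < π / D →
      4*s*(1-s)*θ^2 + 4*s*((m:ℝ)+2)*κ ≤ lam := fun θ h1 h2 =>
    aux_theta m hm κ hκ D hD hDκ lam φ φ' φ'' hd1 hd2 hc2 hODE hNeu₁ hNeu₂ hnonconst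
      s θ hs0 hs1 h1 h2
  have hgoal : 4*s*(1-s)*(π/D)^2 + 4*s*((m:ℝ)+2)*κ ≤ lam := by
    by_contra hcon
    push_neg at hcon
    have hc : 0 < 4*s*(1-s) := by nlinarith
    set B : ℝ := (lam - 4*s*((m:ℝ)+2)*κ)/(4*s*(1-s)) with hB
    have hBp : B < (π/D)^2 := by
      rw [hB, div_lt_iff₀ hc]
      nlinarith
    have hq0 : 0 ≤ Real.sqrt (max B 0) := Real.sqrt_nonneg _
    have hqp : Real.sqrt (max B 0) < π/D := by
      rw [show π/D = π/D from rfl] at *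
      refine (Real.sqrt_lt' hp).2 ?_
      exact max_lt hBp (by positivity)
    set θ := (Real.sqrt (max B 0) + π/D)/2 with hθ
    have hθ0 : 0 < θ := by rw [hθ]; linarith
    have hθp : θ < π/D := by rw [hθ]; linarith
    have hqθ : Real.sqrt (max B 0) < θ := by rw [hθ]; linarith
    have hθB : B < θ^2 := by
      have h1 : Real.sqrt (max B 0) ^ 2 < θ^2 := by
        apply pow_lt_pow_left₀ hqθ hq0
        norm_num
      rw [Real.sq_sqrt (le_max_right B 0)] at h1
      exact lt_of_le_of_lt (le_max_left B 0) h1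
    have hlt : lam - 4*s*((m:ℝ)+2)*κ < 4*s*(1-s)*θ^2 := by
      rw [hB] at hθB
      rw [div_lt_iff₀ hc] at hθB
      linarith [hθB]
    linarith [H θ hθ0 hθp]
  have e : 4*s*(1-s)*(π/D)^2 = 4 * s * (1 - s) * Real.pi ^ 2 / D ^ 2 := by
    field_simp
  linarith [e ▸ hgoal]
end

section
/- Let $D>0$ and let $\gamma > 1$ be a real number. Suppose $y$ is a twice continuously differentiable real-valued function on $[-D/2,D/2]$ with $y > 0$ on $(-D/2,D/2)$ and $y(-D/2)=y(D/2)=0$. Then $\int_{-D/2}^{D/2} y(t)^{\gamma-1} y''(t)\, dt \leq -\frac{4(\gamma-1)}{\gamma^2}\cdot\frac{\pi^2}{D^2}\int_{-D/2}^{D/2} y(t)^{\gamma}\, dt$. -/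
open Real Set intervalIntegral Filter Topology

lemma div_tendsto_of_deriv {y w : ℝ → ℝ} {a b c : ℝ}
    (hy : HasDerivAt y a c) (hw : HasDerivAt w b c)
    (hyc : y c = 0) (hwc : w c = 0) (hb : b ≠ 0) :
    Tendsto (fun t => y t / w t) (𝓝[≠] c) (𝓝 (a / b)) := by
  have h1 := hasDerivAt_iff_tendsto_slope.1 hy
  have h2 := hasDerivAt_iff_tendsto_slope.1 hw
  refine ((h1.div h2 hb)).congr' ?_
  filter_upwards [self_mem_nhdsWithin] with t ht
  have ht' : (t - c) ≠ 0 := sub_ne_zero.2 ht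
  show slope y c t / slope w c t = y t / w t
  rw [slope_def_field, slope_def_field, hyc, hwc, sub_zero, sub_zero, div_div_div_eq,
    mul_comm (y t) (t - c), mul_div_mul_left _ _ ht']

/-- Inequality (5.6) in the proof of Proposition 5.1: combining integration by
parts with Wirtinger's inequality gives
`∫ y^{γ-1} y'' ≤ -(4(γ-1)/γ²) (π²/D²) ∫ y^γ` on `[-D/2, D/2]`
for `y` vanishing at the endpoints and positive inside. -/
theorem ibp_wirtinger_estimate (D : ℝ) (hD : 0 < D) (γ : ℝ) (hγ : 1 < γ)
    (y y' y'' : ℝ → ℝ)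
    (hd1 : ∀ t ∈ Icc (-(D / 2)) (D / 2), HasDerivAt y (y' t) t)
    (hd2 : ∀ t ∈ Icc (-(D / 2)) (D / 2), HasDerivAt y' (y'' t) t)
    (hc2 : ContinuousOn y'' (Icc (-(D / 2)) (D / 2)))
    (hpos : ∀ t ∈ Ioo (-(D / 2)) (D / 2), 0 < y t)
    (hbd₁ : y (-(D / 2)) = 0) (hbd₂ : y (D / 2) = 0) :
    (∫ t in (-(D / 2))..(D / 2), y t ^ (γ - 1) * y'' t)
      ≤ -(4 * (γ - 1) / γ ^ 2) * (Real.pi ^ 2 / D ^ 2)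
          * ∫ t in (-(D / 2))..(D / 2), y t ^ γ := by
  have hD2 : (0:ℝ) < D / 2 := by linarith
  have hγ0 : (0:ℝ) < γ := by linarith
  have hγ1 : (0:ℝ) < γ - 1 := by linarith
  have hab0 : -(D/2) ≤ D/2 := by linarith
  have hπD : 0 < π / D := div_pos pi_pos hD
  set K : ℝ := 4 * (γ - 1) / γ ^ 2 with hK
  set lam : ℝ := (π / D) ^ 2 with hlam
  set w : ℝ → ℝ := fun t => Real.cos (π / D * t) with hwdef
  set w' : ℝ → ℝ := fun t => -(Real.sin (π / D * t)) * (π / D) with hw'def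
  set q : ℝ → ℝ := fun t => w' t / w t with hq
  set qd : ℝ → ℝ := fun t => ((-lam * w t) * w t - w' t * w' t) / (w t) ^ 2 with hqd
  set A : ℝ → ℝ := fun t => y t ^ (γ - 1) with hA
  set B : ℝ → ℝ := fun t => y t ^ γ with hB
  set f : ℝ → ℝ := fun t => -(A t * y'' t) - (K * lam) * B t with hf
  set H : ℝ → ℝ := fun t => -(A t * y' t) + K * (q t * B t) with hH
  set h : ℝ → ℝ := fun t =>
    -((y' t * (γ - 1) * y t ^ (γ - 1 - 1)) * y' t + A t * y'' t)
      + K * (qd t * B t + q t * (y' t * γ * y t ^ (γ - 1))) with hh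
  -- derivatives of w, w', q
  have hwderiv : ∀ t : ℝ, HasDerivAt w (w' t) t := by
    intro t
    have h1 : HasDerivAt (fun s : ℝ => π / D * s) (π / D) t := by
      simpa using (hasDerivAt_id t).const_mul (π / D)
    exact (Real.hasDerivAt_cos (π / D * t)).comp t h1
  have hw'deriv : ∀ t : ℝ, HasDerivAt w' (-lam * w t) t := by
    intro t
    have h1 : HasDerivAt (fun s : ℝ => π / D * s) (π / D) t := by
      simpa using (hasDerivAt_id t).const_mul (π / D)
    have := (((Real.hasDerivAt_sin (π / D * t)).comp t h1).neg).mul_const (π / D)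
    refine this.congr_deriv ?_
    simp [hlam, hwdef]; ring
  have hwpos : ∀ t ∈ Ioo (-(D/2)) (D/2), 0 < w t := by
    intro t ht
    apply Real.cos_pos_of_mem_Ioo
    constructor
    · calc -(π / 2) = π / D * (-(D/2)) := by field_simp
        _ < π / D * t := mul_lt_mul_of_pos_left ht.1 hπD
    · calc π / D * t < π / D * (D/2) := mul_lt_mul_of_pos_left ht.2 hπD
        _ = π / 2 := by field_simp
  have hval : π / D * (D/2) = π / 2 := by field_simp
  have hwb : w (D/2) = 0 := by
    simp only [hwdef, hval]; exact Real.cos_pi_div_two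
  have hwa : w (-(D/2)) = 0 := by
    simp only [hwdef, mul_neg, hval, Real.cos_neg]; exact Real.cos_pi_div_two
  have hw'b : w' (D/2) = -(π / D) := by
    simp only [hw'def, hval, Real.sin_pi_div_two]; ring
  have hw'a : w' (-(D/2)) = π / D := by
    simp only [hw'def, mul_neg, hval, Real.sin_neg, Real.sin_pi_div_two]; ring
  have hqderiv : ∀ t : ℝ, w t ≠ 0 → HasDerivAt q (qd t) t := by
    intro t ht
    exact (hw'deriv t).div (hwderiv t) ht
  -- continuity of basic functions
  have hyc : ContinuousOn y (Icc (-(D/2)) (D/2)) :=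
    fun t ht => (hd1 t ht).continuousAt.continuousWithinAt
  have hy'c : ContinuousOn y' (Icc (-(D/2)) (D/2)) :=
    fun t ht => (hd2 t ht).continuousAt.continuousWithinAt
  have hAc : ContinuousOn A (Icc (-(D/2)) (D/2)) :=
    hyc.rpow_const (fun t ht => Or.inr (by linarith))
  have hBc : ContinuousOn B (Icc (-(D/2)) (D/2)) :=
    hyc.rpow_const (fun t ht => Or.inr (by linarith))
  have hfc : ContinuousOn f (Icc (-(D/2)) (D/2)) :=
    ((hAc.mul hc2).neg).sub (continuousOn_const.mul hBc)
  have hwc : Continuous w := by fun_prop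
  have hw'c : Continuous w' := by fun_prop
  -- interval integrability on the full interval
  have huicc : uIcc (-(D/2)) (D/2) = Icc (-(D/2)) (D/2) := uIcc_of_le hab0
  have hint1 : IntervalIntegrable (fun t => A t * y'' t) MeasureTheory.volume (-(D/2)) (D/2) :=
    ContinuousOn.intervalIntegrable (huicc ▸ hAc.mul hc2)
  have hint2 : IntervalIntegrable B MeasureTheory.volume (-(D/2)) (D/2) :=
    ContinuousOn.intervalIntegrable (huicc ▸ hBc)
  have hintf : IntervalIntegrable f MeasureTheory.volume (-(D/2)) (D/2) :=
    ContinuousOn.intervalIntegrable (huicc ▸ hfc)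
  -- reduce the goal to nonnegativity of the integral of f
  suffices hmain : 0 ≤ ∫ t in (-(D/2))..(D/2), f t by
    have hsplit : (∫ t in (-(D/2))..(D/2), f t)
        = -(∫ t in (-(D/2))..(D/2), A t * y'' t) - (K * lam) * ∫ t in (-(D/2))..(D/2), B t := by
      have hint1' : IntervalIntegrable (fun t => -(A t * y'' t)) MeasureTheory.volume (-(D/2)) (D/2) := hint1.neg
      rw [hf]
      rw [intervalIntegral.integral_sub hint1' (hint2.const_mul (K * lam)),
        intervalIntegral.integral_neg, intervalIntegral.integral_const_mul]
    have hlam2 : K * lam = 4 * (γ - 1) / γ ^ 2 * (π ^ 2 / D ^ 2) := by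
      rw [hK, hlam]; rw [div_pow]
    rw [hsplit, hlam2] at hmain
    have : (∫ t in (-(D/2))..(D/2), A t * y'' t) = ∫ t in (-(D/2))..(D/2), y t ^ (γ-1) * y'' t := rfl
    rw [this] at hmain
    linarith [hmain]
  -- derivative of H on the open interval
  have hHderiv : ∀ t ∈ Ioo (-(D/2)) (D/2), HasDerivAt H (h t) t := by
    intro t ht
    have hyt : y t ≠ 0 := (hpos t ht).ne'
    have htI : t ∈ Icc (-(D/2)) (D/2) := Ioo_subset_Icc_self ht
    have hAd : HasDerivAt A (y' t * (γ - 1) * y t ^ (γ - 1 - 1)) t :=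
      (hd1 t htI).rpow_const (Or.inl hyt)
    have hBd : HasDerivAt B (y' t * γ * y t ^ (γ - 1)) t :=
      (hd1 t htI).rpow_const (Or.inl hyt)
    have hqd' : HasDerivAt q (qd t) t := hqderiv t (hwpos t ht).ne'
    exact ((hAd.mul (hd2 t htI)).neg).add ((hqd'.mul hBd).const_mul K)
  -- pointwise inequality h ≤ f on the open interval
  have hptwise : ∀ t ∈ Ioo (-(D/2)) (D/2), h t ≤ f t := by
    intro t ht
    have hyt : 0 < y t := hpos t ht
    have hwt : 0 < w t := hwpos t ht
    have hP : 0 < y t ^ (γ - 1 - 1) := Real.rpow_pos_of_pos hyt _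
    have e1 : y t ^ (γ - 1) = y t ^ (γ - 1 - 1) * y t := by
      rw [← Real.rpow_add_one hyt.ne' (γ - 1 - 1)]; norm_num
    have e2 : y t ^ γ = y t ^ (γ - 1 - 1) * y t * y t := by
      rw [← e1, ← Real.rpow_add_one hyt.ne' (γ - 1)]; norm_num
    have eqd : qd t = -lam - q t ^ 2 := by
      rw [hqd, hq]
      field_simp
    have key : f t - h t = ((γ - 1) * y t ^ (γ - 1 - 1) / γ ^ 2) * (γ * y' t - 2 * q t * y t) ^ 2 := by
      simp only [hf, hh, hA, hB, hK, eqd, e1, e2]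
      field_simp
      ring
    have : 0 ≤ f t - h t := by
      rw [key]; positivity
    linarith
  -- FTC + monotonicity on compact subintervals
  have step : ∀ a b : ℝ, a ∈ Ioo (-(D/2)) (D/2) → b ∈ Ioo (-(D/2)) (D/2) → a ≤ b →
      H b - H a ≤ ∫ t in a..b, f t := by
    intro a b ha hb hab
    have hsub : Icc a b ⊆ Ioo (-(D/2)) (D/2) := Icc_subset_Ioo ha.1 hb.2
    have hsub' : Icc a b ⊆ Icc (-(D/2)) (D/2) := hsub.trans Ioo_subset_Icc_self
    have huab : uIcc a b = Icc a b := uIcc_of_le hab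
    -- continuity of h on Icc a b
    have hycab : ContinuousOn y (Icc a b) := hyc.mono hsub'
    have hy'cab : ContinuousOn y' (Icc a b) := hy'c.mono hsub'
    have hy''cab : ContinuousOn y'' (Icc a b) := hc2.mono hsub'
    have hyne : ∀ t ∈ Icc a b, y t ≠ 0 := fun t ht => (hpos t (hsub ht)).ne'
    have hwne : ∀ t ∈ Icc a b, w t ≠ 0 := fun t ht => (hwpos t (hsub ht)).ne'
    have hqcab : ContinuousOn q (Icc a b) :=
      (hw'c.continuousOn).div (hwc.continuousOn) hwne
    have hqdcab : ContinuousOn qd (Icc a b) := by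
      apply ContinuousOn.div
      · exact ((continuousOn_const.mul hwc.continuousOn).mul hwc.continuousOn).sub
          (hw'c.continuousOn.mul hw'c.continuousOn)
      · exact (hwc.continuousOn).pow 2
      · intro t ht; exact pow_ne_zero 2 (hwne t ht)
    have hhcab : ContinuousOn h (Icc a b) := by
      apply ContinuousOn.add
      · apply ContinuousOn.neg
        apply ContinuousOn.add
        · exact ((hy'cab.mul continuousOn_const).mul
            (hycab.rpow_const (fun t ht => Or.inl (hyne t ht)))).mul hy'cab
        · exact (hAc.mono hsub').mul hy''cab
      · apply ContinuousOn.mul continuousOn_const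
        apply ContinuousOn.add
        · exact hqdcab.mul (hBc.mono hsub')
        · exact hqcab.mul ((hy'cab.mul continuousOn_const).mul
            (hycab.rpow_const (fun t ht => Or.inl (hyne t ht))))
    have hinth : IntervalIntegrable h MeasureTheory.volume a b :=
      ContinuousOn.intervalIntegrable (huab ▸ hhcab)
    have hintfab : IntervalIntegrable f MeasureTheory.volume a b :=
      ContinuousOn.intervalIntegrable (huab ▸ (hfc.mono hsub'))
    have hFTC : (∫ t in a..b, h t) = H b - H a := by
      apply intervalIntegral.integral_eq_sub_of_hasDerivAt
      · intro t ht
        exact hHderiv t (hsub (huab ▸ ht))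
      · exact hinth
    rw [← hFTC]
    exact intervalIntegral.integral_mono_on hab hinth hintfab
      (fun t ht => hptwise t (hsub ht))
  -- identity B = A * y on Icc
  have hBA : ∀ t ∈ Icc (-(D/2)) (D/2), B t = A t * y t := by
    intro t ht
    rcases eq_or_ne (y t) 0 with h0 | h0
    · simp [hB, hA, h0, Real.zero_rpow hγ0.ne']
    · show y t ^ γ = y t ^ (γ - 1) * y t
      calc y t ^ γ = y t ^ (γ - 1 + 1) := by norm_num
        _ = y t ^ (γ - 1) * y t := Real.rpow_add_one h0 _
  -- H tends to 0 at endpoints where y and w vanish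
  have hend : ∀ c ∈ Icc (-(D/2)) (D/2), y c = 0 → w c = 0 → w' c ≠ 0 →
      Tendsto H (𝓝[Ioo (-(D/2)) (D/2)] c) (𝓝 0) := by
    intro c hc hyc0 hwc0 hw'c0
    set lf := 𝓝[Ioo (-(D/2)) (D/2)] c with hlf
    have hAten : Tendsto A lf (𝓝 0) := by
      have h1 : Tendsto A (𝓝[Icc (-(D/2)) (D/2)] c) (𝓝 (A c)) := hAc c hc
      have h2 : A c = 0 := by
        show y c ^ (γ - 1) = 0
        rw [hyc0, Real.zero_rpow hγ1.ne']
      rw [h2] at h1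
      exact h1.mono_left (nhdsWithin_mono c Ioo_subset_Icc_self)
    have hy'ten : Tendsto y' lf (𝓝 (y' c)) :=
      (hy'c c hc).mono_left (nhdsWithin_mono c Ioo_subset_Icc_self)
    have hw'ten : Tendsto w' lf (𝓝 (w' c)) :=
      (hw'c.tendsto c).mono_left nhdsWithin_le_nhds
    have hdiv : Tendsto (fun t => y t / w t) lf (𝓝 (y' c / w' c)) := by
      have := div_tendsto_of_deriv (hd1 c hc) (hwderiv c) hyc0 hwc0 hw'c0
      exact this.mono_left (nhdsWithin_mono c (fun t ht => ne_of_mem_of_not_mem ht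
        (fun hcmem => absurd hyc0 (hpos c hcmem).ne')))
    have hqB : Tendsto (fun t => q t * B t) lf (𝓝 0) := by
      have hten := (hw'ten.mul hAten).mul hdiv
      rw [mul_zero, zero_mul] at hten
      apply hten.congr'
      filter_upwards [self_mem_nhdsWithin] with t ht
      have hwt : w t ≠ 0 := (hwpos t ht).ne'
      rw [hBA t (Ioo_subset_Icc_self ht), hq]
      field_simp
    have hfin := ((hAten.mul hy'ten).neg).add (hqB.const_mul K)
    rw [zero_mul, neg_zero, mul_zero, zero_add] at hfin
    exact hfin
  have hendb : Tendsto H (𝓝[Ioo (-(D/2)) (D/2)] (D/2)) (𝓝 0) :=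
    hend (D/2) (right_mem_Icc.2 hab0) hbd₂ hwb (by rw [hw'b]; exact neg_ne_zero.2 hπD.ne')
  have henda : Tendsto H (𝓝[Ioo (-(D/2)) (D/2)] (-(D/2))) (𝓝 0) :=
    hend (-(D/2)) (left_mem_Icc.2 hab0) hbd₁ hwa (by rw [hw'a]; exact hπD.ne')
  -- primitive of f
  set F : ℝ → ℝ := fun x => ∫ t in (-(D/2))..x, f t with hF
  have hfint_on : MeasureTheory.IntegrableOn f (uIcc (-(D/2)) (D/2)) MeasureTheory.volume := by
    rw [huicc]
    exact (intervalIntegrable_iff_integrableOn_Icc_of_le hab0).1 hintf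
  have hFcont : ContinuousOn F (Icc (-(D/2)) (D/2)) := by
    rw [← huicc]
    exact intervalIntegral.continuousOn_primitive_interval hfint_on
  have hFb : Tendsto F (𝓝[Ioo (-(D/2)) (D/2)] (D/2)) (𝓝 (F (D/2))) :=
    (hFcont (D/2) (right_mem_Icc.2 hab0)).mono_left (nhdsWithin_mono _ Ioo_subset_Icc_self)
  have hFa : Tendsto F (𝓝[Ioo (-(D/2)) (D/2)] (-(D/2))) (𝓝 0) := by
    have h0 : F (-(D/2)) = 0 := intervalIntegral.integral_same
    have := (hFcont (-(D/2)) (left_mem_Icc.2 hab0)).mono_left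
      (nhdsWithin_mono _ Ioo_subset_Icc_self)
    rwa [h0] at this
  -- approach the endpoints
  set aε : ℝ → ℝ := fun s => -(D/2) + s with haε
  set bε : ℝ → ℝ := fun s => D/2 - s with hbε
  have hIoo_mem : Ioo (0:ℝ) (D/2) ∈ 𝓝[>] (0:ℝ) := Ioo_mem_nhdsGT hD2
  have hamem : ∀ s ∈ Ioo (0:ℝ) (D/2), aε s ∈ Ioo (-(D/2)) (D/2) := by
    intro s hs; constructor
    · show -(D/2) < -(D/2) + s; linarith [hs.1]
    · show -(D/2) + s < D/2; linarith [hs.2]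
  have hbmem : ∀ s ∈ Ioo (0:ℝ) (D/2), bε s ∈ Ioo (-(D/2)) (D/2) := by
    intro s hs; constructor
    · show -(D/2) < D/2 - s; linarith [hs.2]
    · show D/2 - s < D/2; linarith [hs.1]
  have haten : Tendsto aε (𝓝[>] (0:ℝ)) (𝓝[Ioo (-(D/2)) (D/2)] (-(D/2))) := by
    apply tendsto_nhdsWithin_of_tendsto_nhds_of_eventually_within
    · have h1 : Tendsto aε (𝓝 (0:ℝ)) (𝓝 (-(D/2) + 0)) :=
        tendsto_const_nhds.add tendsto_id
      rw [add_zero] at h1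
      exact h1.mono_left nhdsWithin_le_nhds
    · filter_upwards [hIoo_mem] with s hs using hamem s hs
  have hbten : Tendsto bε (𝓝[>] (0:ℝ)) (𝓝[Ioo (-(D/2)) (D/2)] (D/2)) := by
    apply tendsto_nhdsWithin_of_tendsto_nhds_of_eventually_within
    · have h1 : Tendsto bε (𝓝 (0:ℝ)) (𝓝 (D/2 - 0)) :=
        tendsto_const_nhds.sub tendsto_id
      rw [sub_zero] at h1
      exact h1.mono_left nhdsWithin_le_nhds
    · filter_upwards [hIoo_mem] with s hs using hbmem s hs
  have hIten : Tendsto (fun s => F (bε s) - F (aε s)) (𝓝[>] (0:ℝ)) (𝓝 (F (D/2) - 0)) :=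
    (hFb.comp hbten).sub (hFa.comp haten)
  have hHten : Tendsto (fun s => H (bε s) - H (aε s)) (𝓝[>] (0:ℝ)) (𝓝 (0 - 0)) :=
    (hendb.comp hbten).sub (henda.comp haten)
  have hev : ∀ᶠ s in 𝓝[>] (0:ℝ), H (bε s) - H (aε s) ≤ F (bε s) - F (aε s) := by
    filter_upwards [hIoo_mem] with s hs
    have haI := hamem s hs
    have hbI := hbmem s hs
    have hle : aε s ≤ bε s := by
      show -(D/2) + s ≤ D/2 - s; linarith [hs.2]
    have hstep := step (aε s) (bε s) haI hbI hle
    have hsub1 : IntervalIntegrable f MeasureTheory.volume (-(D/2)) (bε s) := by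
      apply hintf.mono_set
      rw [huicc, uIcc_of_le hbI.1.le]
      exact Icc_subset_Icc le_rfl hbI.2.le
    have hsub2 : IntervalIntegrable f MeasureTheory.volume (-(D/2)) (aε s) := by
      apply hintf.mono_set
      rw [huicc, uIcc_of_le haI.1.le]
      exact Icc_subset_Icc le_rfl haI.2.le
    have heq : F (bε s) - F (aε s) = ∫ t in (aε s)..(bε s), f t :=
      intervalIntegral.integral_interval_sub_left hsub1 hsub2
    rw [heq]
    exact hstep
  have hfinal := le_of_tendsto_of_tendsto hHten hIten hev
  rw [sub_zero, sub_zero] at hfinal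
  exact hfinal
end

section
/- Let $a,b$ be positive integers, $m \geq 1$ an integer, $\kappa_1,\kappa_2 \geq 0$ real numbers, and $D>0$ with $\sqrt{\kappa_2}\,D/2 < \pi/2$ and $2\sqrt{\kappa_1}\,D/2 < \pi/2$. Let $W(t)=2a(m-1)\sqrt{\kappa_2}\tan(\sqrt{\kappa_2}\,t)+2b\sqrt{\kappa_1}\tan(2\sqrt{\kappa_1}\,t)$ and $V(t)=2a(m-1)\kappa_2\sec^2(\sqrt{\kappa_2}\,t)+4b\kappa_1\sec^2(2\sqrt{\kappa_1}\,t)$. Suppose $\lambda \in \mathbb{R}$ and $y$ is a twice continuously differentiable real-valued function on $[-D/2,D/2]$ with $y \geq 0$, $y$ not identically zero, $y(-D/2)=y(D/2)=0$, $y > 0$ on $(-D/2,D/2)$, and $y''(t)-W(t)y'(t)-V(t)y(t)+\lambda y(t)=0$ on $[-D/2,D/2]$. Then for every real $\gamma \geq 2$, $\lambda \geq \frac{4(\gamma-1)}{\gamma^2}\cdot\frac{\pi^2}{D^2} + \Big(1-\frac{1}{\gamma}\Big)\big(2a(m-1)\kappa_2 + 4b\kappa_1\big)$. -/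
open Real Set
open intervalIntegral

set_option maxHeartbeats 2000000


lemma rpow_sq_helper {x : ℝ} (hx : 0 ≤ x) (c : ℝ) : (x ^ c) ^ 2 = x ^ (c * 2) := by
  rw [← Real.rpow_natCast (x ^ c) 2, ← Real.rpow_mul hx]
  norm_num

lemma wirtinger_aux {D : ℝ} (hD : 0 < D) (u u' : ℝ → ℝ)
    (hd : ∀ t ∈ Icc (-(D/2)) (D/2), HasDerivAt u (u' t) t)
    (hc : ContinuousOn u' (Icc (-(D/2)) (D/2)))
    (h1 : u (-(D/2)) = 0) (h2 : u (D/2) = 0) :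
    (Real.pi/D)^2 * ∫ t in (-(D/2))..(D/2), (u t)^2 ≤ ∫ t in (-(D/2))..(D/2), (u' t)^2 := by
  set B : ℝ := D/2 with hBdef
  set A : ℝ := -(D/2) with hAdef
  set k : ℝ := Real.pi / D with hkdef
  have hB : 0 < B := by positivity
  have hAB : A < B := by simp only [hAdef, hBdef]; linarith
  have hk : 0 < k := by positivity
  have hkB : k * B = Real.pi / 2 := by
    rw [hkdef, hBdef]; field_simp
  have hkD : k * D = Real.pi := by rw [hkdef]; field_simp
  have huc : ContinuousOn u (Icc A B) :=
    fun t ht => ((hd t ht).continuousAt).continuousWithinAt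
  -- bounds
  obtain ⟨M, hM⟩ := isCompact_Icc.exists_bound_of_continuousOn hc
  have hM0 : 0 ≤ M := le_trans (norm_nonneg _) (hM A ⟨le_refl _, hAB.le⟩)
  set g : ℝ → ℝ := fun t => u' t ^ 2 - k ^ 2 * u t ^ 2 with hgdef
  have hgc : ContinuousOn g (Icc A B) := by
    exact (hc.pow 2).sub (continuousOn_const.mul (huc.pow 2))
  obtain ⟨Mg, hMg⟩ := isCompact_Icc.exists_bound_of_continuousOn hgc
  have hMg0 : 0 ≤ Mg := le_trans (norm_nonneg _) (hMg A ⟨le_refl _, hAB.le⟩)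
  -- cosine lower bound
  have hcos : ∀ t ∈ Icc A B, 2 / D * (B - |t|) ≤ Real.cos (k * t) := by
    intro t ht
    have htB : |t| ≤ B := abs_le.2 ⟨ht.1, ht.2⟩
    have h1 : Real.cos (k * t) = Real.sin (k * (B - |t|)) := by
      rw [← Real.cos_abs, abs_mul, abs_of_pos hk, mul_sub, hkB,
        Real.sin_pi_div_two_sub]
    rw [h1]
    have h2 : 2 / Real.pi * (k * (B - |t|)) ≤ Real.sin (k * (B - |t|)) := by
      apply Real.mul_le_sin
      · exact mul_nonneg hk.le (by linarith [abs_nonneg t])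
      · calc k * (B - |t|) ≤ k * B := by nlinarith [abs_nonneg t]
          _ = Real.pi / 2 := hkB
    calc 2 / D * (B - |t|) = 2 / Real.pi * (k * (B - |t|)) := by
          field_simp [hkdef]; linear_combination (-(B - |t|)) * hkD
      _ ≤ _ := h2
  have hcpos : ∀ t ∈ Icc A B, |t| < B → 0 < Real.cos (k * t) := by
    intro t ht h
    calc (0:ℝ) < 2 / D * (B - |t|) := by
          apply mul_pos (by positivity); linarith
      _ ≤ _ := hcos t ht
  -- integrability over closed interval
  have hgint : ∀ s t : ℝ, s ∈ Icc A B → t ∈ Icc A B → IntervalIntegrable g MeasureTheory.volume s t := by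
    intro s t hs ht
    apply (hgc.mono _).intervalIntegrable
    rw [← uIcc_of_le hAB.le]
    exact uIcc_subset_uIcc ((uIcc_of_le hAB.le).symm ▸ hs) ((uIcc_of_le hAB.le).symm ▸ ht)
  have hsubIcc : ∀ s t : ℝ, s ∈ Icc A B → t ∈ Icc A B → uIcc s t ⊆ Icc A B := by
    intro s t hs ht
    rw [← uIcc_of_le hAB.le]
    exact uIcc_subset_uIcc ((uIcc_of_le hAB.le).symm ▸ hs) ((uIcc_of_le hAB.le).symm ▸ ht)
  -- endpoint decay bounds
  have huB : ∀ t ∈ Icc A B, |u t| ≤ M * (B - t) := by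
    intro t ht
    have hsub : uIcc t B ⊆ Icc A B := hsubIcc t B ht (right_mem_Icc.2 hAB.le)
    have hftc : ∫ x in t..B, u' x = u B - u t :=
      integral_eq_sub_of_hasDerivAt (fun x hx => hd x (hsub hx))
        ((hc.mono hsub).intervalIntegrable)
    have hb : ‖∫ x in t..B, u' x‖ ≤ M * |B - t| :=
      norm_integral_le_of_norm_le_const (fun x hx => hM x (hsub (uIoc_subset_uIcc hx)))
    rw [hftc, h2, zero_sub, norm_neg, Real.norm_eq_abs,
      abs_of_nonneg (by linarith [ht.2] : (0:ℝ) ≤ B - t)] at hb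
    exact hb
  have huA : ∀ t ∈ Icc A B, |u t| ≤ M * (t - A) := by
    intro t ht
    have hsub : uIcc A t ⊆ Icc A B := hsubIcc A t (left_mem_Icc.2 hAB.le) ht
    have hftc : ∫ x in A..t, u' x = u t - u A :=
      integral_eq_sub_of_hasDerivAt (fun x hx => hd x (hsub hx))
        ((hc.mono hsub).intervalIntegrable)
    have hb : ‖∫ x in A..t, u' x‖ ≤ M * |t - A| :=
      norm_integral_le_of_norm_le_const (fun x hx => hM x (hsub (uIoc_subset_uIcc hx)))
    rw [hftc, h1, sub_zero, Real.norm_eq_abs,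
      abs_of_nonneg (by linarith [ht.1] : (0:ℝ) ≤ t - A)] at hb
    exact hb
  -- the key estimate for each small ε
  have key : ∀ ε : ℝ, 0 < ε → ε < B →
      -((2 * Mg + Real.pi * M ^ 2) * ε) ≤ ∫ t in A..B, g t := by
    intro ε hε hεB
    set s₀ : ℝ := -(B - ε) with hs₀
    set t₀ : ℝ := B - ε with ht₀
    have hst : s₀ ≤ t₀ := by simp only [hs₀, ht₀]; linarith
    have hs₀I : s₀ ∈ Icc A B := by
      constructor <;> simp only [hs₀, hAdef, hBdef] <;> linarith
    have ht₀I : t₀ ∈ Icc A B := by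
      constructor <;> simp only [ht₀, hAdef, hBdef] <;> linarith
    have habs : ∀ x ∈ Icc s₀ t₀, |x| ≤ B - ε :=
      fun x hx => abs_le.2 ⟨by linarith [hx.1], by linarith [hx.2]⟩
    have hsub : Icc s₀ t₀ ⊆ Icc A B := by
      apply Icc_subset_Icc <;> simp only [hs₀, ht₀, hAdef, hBdef] <;> linarith
    have hcosx : ∀ x ∈ Icc s₀ t₀, 0 < Real.cos (k * x) :=
      fun x hx => hcpos x (hsub hx) (lt_of_le_of_lt (habs x hx) (by linarith))
    set q : ℝ → ℝ := fun x => u' x + k * Real.tan (k * x) * u x with hq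
    set F : ℝ → ℝ := fun x => -(k * Real.tan (k * x) * u x ^ 2) with hF
    have hFd : ∀ x ∈ Icc s₀ t₀, HasDerivAt F (g x - q x ^ 2) x := by
      intro x hx
      have hcx := hcosx x hx
      have h0 : HasDerivAt (fun x : ℝ => k * x) k x := by
        simpa using (hasDerivAt_id x).const_mul k
      have htd : HasDerivAt (fun x => Real.tan (k * x)) (1 / Real.cos (k * x) ^ 2 * k) x :=
        (Real.hasDerivAt_tan hcx.ne').comp x h0
      have hux := hd x (hsub hx)
      have hprod := ((htd.const_mul k).mul (hux.pow 2)).neg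
      refine hprod.congr_deriv ?_
      symm
      have hsc := Real.sin_sq_add_cos_sq (k * x)
      have hid : 1 / Real.cos (k * x) ^ 2 = 1 + Real.tan (k * x) ^ 2 := by
        rw [Real.tan_eq_sin_div_cos]
        field_simp
        try linarith [hsc]
      rw [hid]
      simp only [hgdef, hq, Pi.pow_apply]
      push_cast
      ring
    have htanc : ContinuousOn (fun x => Real.tan (k * x)) (Icc s₀ t₀) := by
      simp only [Real.tan_eq_sin_div_cos]
      exact ((Real.continuous_sin.comp (continuous_const.mul continuous_id)).continuousOn).div
        ((Real.continuous_cos.comp (continuous_const.mul continuous_id)).continuousOn)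
        (fun x hx => (hcosx x hx).ne')
    have hqc : ContinuousOn q (Icc s₀ t₀) :=
      (hc.mono hsub).add ((continuousOn_const.mul htanc).mul (huc.mono hsub))
    have hqint : IntervalIntegrable (fun x => q x ^ 2) MeasureTheory.volume s₀ t₀ := by
      apply ContinuousOn.intervalIntegrable
      rw [uIcc_of_le hst]
      exact hqc.pow 2
    have hgmidint := hgint s₀ t₀ hs₀I ht₀I
    have hF'int : IntervalIntegrable (fun x => g x - q x ^ 2) MeasureTheory.volume s₀ t₀ :=
      hgmidint.sub hqint
    have hFTC : ∫ t in s₀..t₀, (g t - q t ^ 2) = F t₀ - F s₀ :=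
      integral_eq_sub_of_hasDerivAt (fun x hx => hFd x (by rwa [uIcc_of_le hst] at hx)) hF'int
    have hgmid : F t₀ - F s₀ ≤ ∫ t in s₀..t₀, g t := by
      have h0 : 0 ≤ ∫ t in s₀..t₀, q t ^ 2 := integral_nonneg hst (fun x _ => sq_nonneg _)
      rw [integral_sub hgmidint hqint] at hFTC
      linarith
    -- bounds on F at the two points
    have hFbd : ∀ x ∈ Icc A B, |x| = B - ε → |u x| ≤ M * ε → |F x| ≤ Real.pi / 2 * M ^ 2 * ε := by
      intro x hxI hxabs hux
      have hcosx' : 2 / D * ε ≤ Real.cos (k * x) := by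
        have h := hcos x hxI
        rw [hxabs] at h
        simpa using h
      have hcp : 0 < Real.cos (k * x) := lt_of_lt_of_le (by positivity) hcosx'
      have htanb : |Real.tan (k * x)| ≤ D / (2 * ε) := by
        rw [Real.tan_eq_sin_div_cos, abs_div, abs_of_pos hcp,
          div_le_div_iff₀ hcp (by positivity)]
        have hsin := Real.abs_sin_le_one (k * x)
        have e1 : D * (2 / D * ε) = 2 * ε := by field_simp
        have e2 := mul_le_mul_of_nonneg_left hcosx' hD.le
        have e3 := mul_le_mul_of_nonneg_right hsin (by positivity : (0:ℝ) ≤ 2 * ε)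
        linarith
      have hFval : |F x| = k * |Real.tan (k * x)| * u x ^ 2 := by
        simp only [hF, abs_neg, abs_mul, abs_of_pos hk, abs_pow, sq_abs]
      rw [hFval]
      have hu2 : u x ^ 2 ≤ (M * ε) ^ 2 := by
        rw [← sq_abs]
        exact pow_le_pow_left₀ (abs_nonneg _) hux 2
      have hstep : k * |Real.tan (k * x)| * u x ^ 2 ≤ k * (D / (2 * ε)) * (M * ε) ^ 2 := by
        apply mul_le_mul
        · exact mul_le_mul_of_nonneg_left htanb hk.le
        · exact hu2
        · exact sq_nonneg _
        · positivity
      have heq : k * (D / (2 * ε)) * (M * ε) ^ 2 = k * D / 2 * M ^ 2 * ε := by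
        field_simp
      rw [heq, hkD] at hstep
      exact hstep
    have hFt₀ : |F t₀| ≤ Real.pi / 2 * M ^ 2 * ε := by
      apply hFbd t₀ ht₀I
      · rw [abs_of_nonneg (by simp only [ht₀]; linarith)]
      · have := huB t₀ ht₀I
        simpa [ht₀] using this
    have hFs₀ : |F s₀| ≤ Real.pi / 2 * M ^ 2 * ε := by
      apply hFbd s₀ hs₀I
      · rw [abs_of_nonpos (by simp only [hs₀]; linarith)]; simp [hs₀, ht₀]
      · have := huA s₀ hs₀I
        have he : s₀ - A = ε := by simp only [hs₀, hAdef, hBdef]; ring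
        rwa [he] at this
    -- edge integrals
    have hedge1 : |∫ t in A..s₀, g t| ≤ Mg * ε := by
      have hb : ‖∫ t in A..s₀, g t‖ ≤ Mg * |s₀ - A| :=
        norm_integral_le_of_norm_le_const
          (fun x hx => hMg x (hsubIcc A s₀ (left_mem_Icc.2 hAB.le) hs₀I (uIoc_subset_uIcc hx)))
      have he : s₀ - A = ε := by simp only [hs₀, hAdef, hBdef]; ring
      rwa [he, abs_of_pos hε, Real.norm_eq_abs] at hb
    have hedge2 : |∫ t in t₀..B, g t| ≤ Mg * ε := by
      have hb : ‖∫ t in t₀..B, g t‖ ≤ Mg * |B - t₀| :=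
        norm_integral_le_of_norm_le_const
          (fun x hx => hMg x (hsubIcc t₀ B ht₀I (right_mem_Icc.2 hAB.le) (uIoc_subset_uIcc hx)))
      have he : B - t₀ = ε := by simp only [ht₀]; ring
      rwa [he, abs_of_pos hε, Real.norm_eq_abs] at hb
    -- split the integral
    have hsplit : ∫ t in A..B, g t =
        (∫ t in A..s₀, g t) + (∫ t in s₀..t₀, g t) + ∫ t in t₀..B, g t := by
      rw [integral_add_adjacent_intervals (hgint A s₀ (left_mem_Icc.2 hAB.le) hs₀I) hgmidint,
        integral_add_adjacent_intervals (hgint A t₀ (left_mem_Icc.2 hAB.le) ht₀I)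
          (hgint t₀ B ht₀I (right_mem_Icc.2 hAB.le))]
    have h1 := abs_le.1 hedge1
    have h2' := abs_le.1 hedge2
    have h3 := abs_le.1 hFt₀
    have h4 := abs_le.1 hFs₀
    rw [hsplit]
    clear_value F q s₀ t₀ g k
    linarith [hgmid, h1.1, h2'.1, h3.1, h4.2]
  -- conclude nonnegativity of ∫ g
  have hg0 : 0 ≤ ∫ t in A..B, g t := by
    by_contra hcon
    push_neg at hcon
    set X := ∫ t in A..B, g t with hX
    set C := 2 * Mg + Real.pi * M ^ 2 with hC
    have hC0 : 0 ≤ C := by positivity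
    have hXpos : 0 < -X := by linarith
    set ε := min (B / 2) (-X / (C + 1)) with hεdef
    have hε0 : 0 < ε := lt_min (by positivity) (div_pos hXpos (by linarith))
    have hεB : ε < B := lt_of_le_of_lt (min_le_left _ _) (by linarith)
    have hk1 := key ε hε0 hεB
    have h2 : C * ε ≤ C * (-X / (C + 1)) := by
      rw [hεdef]
      exact mul_le_mul_of_nonneg_left (min_le_right _ _) hC0
    have h3 : C * (-X / (C + 1)) < -X := by
      rw [mul_div_assoc', div_lt_iff₀ (by linarith : (0:ℝ) < C + 1)]
      nlinarith
    clear_value X C ε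
    linarith
  -- unfold g
  have hu2int : IntervalIntegrable (fun t => u t ^ 2) MeasureTheory.volume A B := by
    apply ContinuousOn.intervalIntegrable
    rw [uIcc_of_le hAB.le]
    exact huc.pow 2
  have hu'2int : IntervalIntegrable (fun t => u' t ^ 2) MeasureTheory.volume A B := by
    apply ContinuousOn.intervalIntegrable
    rw [uIcc_of_le hAB.le]
    exact hc.pow 2
  have heq : ∫ t in A..B, g t =
      (∫ t in A..B, u' t ^ 2) - k ^ 2 * ∫ t in A..B, u t ^ 2 := by
    simp only [hgdef]
    rw [integral_sub hu'2int (hu2int.const_mul _), integral_const_mul]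
  rw [heq] at hg0
  linarith

/-- The key intermediate inequality in the proof of Proposition 5.1: if `y ≥ 0`
vanishes at the endpoints of `[-D/2, D/2]`, is positive inside, and satisfies
`y'' - W y' - V y + λ y = 0`, where
`W(t) = 2a(m-1)√κ₂ tan(√κ₂ t) + 2b√κ₁ tan(2√κ₁ t)` and
`V(t) = 2a(m-1)κ₂ sec²(√κ₂ t) + 4bκ₁ sec²(2√κ₁ t)`, then for every `γ ≥ 2`,
`λ ≥ (4(γ-1)/γ²) π²/D² + (1 - 1/γ)(2a(m-1)κ₂ + 4bκ₁)`. -/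
theorem key_eigenvalue_inequality (a b m : ℕ) (ha : 0 < a) (hb : 0 < b) (hm : 1 ≤ m)
    (κ₁ κ₂ : ℝ) (hκ₁ : 0 ≤ κ₁) (hκ₂ : 0 ≤ κ₂) (D : ℝ) (hD : 0 < D)
    (hD₂ : Real.sqrt κ₂ * (D / 2) < Real.pi / 2)
    (hD₁ : 2 * Real.sqrt κ₁ * (D / 2) < Real.pi / 2)
    (W V : ℝ → ℝ)
    (hW : ∀ t, W t = 2 * a * ((m : ℝ) - 1) * Real.sqrt κ₂ * Real.tan (Real.sqrt κ₂ * t)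
        + 2 * b * Real.sqrt κ₁ * Real.tan (2 * Real.sqrt κ₁ * t))
    (hV : ∀ t, V t = 2 * a * ((m : ℝ) - 1) * κ₂ * (1 / Real.cos (Real.sqrt κ₂ * t) ^ 2)
        + 4 * b * κ₁ * (1 / Real.cos (2 * Real.sqrt κ₁ * t) ^ 2))
    (lam : ℝ) (y y' y'' : ℝ → ℝ)
    (hd1 : ∀ t ∈ Icc (-(D / 2)) (D / 2), HasDerivAt y (y' t) t)
    (hd2 : ∀ t ∈ Icc (-(D / 2)) (D / 2), HasDerivAt y' (y'' t) t)
    (hc2 : ContinuousOn y'' (Icc (-(D / 2)) (D / 2)))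
    (hnonneg : ∀ t ∈ Icc (-(D / 2)) (D / 2), 0 ≤ y t)
    (hne : ¬ ∀ t ∈ Icc (-(D / 2)) (D / 2), y t = 0)
    (hbd₁ : y (-(D / 2)) = 0) (hbd₂ : y (D / 2) = 0)
    (hpos : ∀ t ∈ Ioo (-(D / 2)) (D / 2), 0 < y t)
    (hODE : ∀ t ∈ Icc (-(D / 2)) (D / 2),
      y'' t - W t * y' t - V t * y t + lam * y t = 0) :
    ∀ γ : ℝ, 2 ≤ γ →
      4 * (γ - 1) / γ ^ 2 * (Real.pi ^ 2 / D ^ 2)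
        + (1 - 1 / γ) * (2 * a * ((m : ℝ) - 1) * κ₂ + 4 * b * κ₁) ≤ lam := by
  intro γ hγ
  have hγ0 : (0:ℝ) < γ := by linarith
  have hAB : -(D/2) < D/2 := by linarith
  have hm1 : (0:ℝ) ≤ (m:ℝ) - 1 := by
    have : (1:ℝ) ≤ (m:ℝ) := by exact_mod_cast hm
    linarith
  have hsubIcc : ∀ s t : ℝ, s ∈ Icc (-(D/2)) (D/2) → t ∈ Icc (-(D/2)) (D/2) →
      uIcc s t ⊆ Icc (-(D/2)) (D/2) := by
    intro s t hs ht
    rw [← uIcc_of_le hAB.le]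
    exact uIcc_subset_uIcc ((uIcc_of_le hAB.le).symm ▸ hs) ((uIcc_of_le hAB.le).symm ▸ ht)
  -- positivity of the cosines on the closed interval
  have hcosgen : ∀ c : ℝ, 0 ≤ c → c * (D/2) < Real.pi / 2 →
      ∀ t ∈ Icc (-(D/2)) (D/2), 0 < Real.cos (c * t) := by
    intro c hc hcB t ht
    apply Real.cos_pos_of_mem_Ioo
    have habs : |c * t| < Real.pi / 2 := by
      rw [abs_mul, abs_of_nonneg hc]
      have h1 : |t| ≤ D/2 := abs_le.2 ⟨by linarith [ht.1], ht.2⟩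
      calc c * |t| ≤ c * (D/2) := mul_le_mul_of_nonneg_left h1 hc
        _ < Real.pi / 2 := hcB
    exact abs_lt.1 habs
  have hcos2 : ∀ t ∈ Icc (-(D/2)) (D/2), 0 < Real.cos (Real.sqrt κ₂ * t) :=
    hcosgen _ (Real.sqrt_nonneg _) hD₂
  have hcos1 : ∀ t ∈ Icc (-(D/2)) (D/2), 0 < Real.cos (2 * Real.sqrt κ₁ * t) :=
    hcosgen _ (by positivity) hD₁
  -- continuity of y and y'
  have hyc : ContinuousOn y (Icc (-(D/2)) (D/2)) :=
    fun t ht => (hd1 t ht).continuousAt.continuousWithinAt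
  have hy'c : ContinuousOn y' (Icc (-(D/2)) (D/2)) :=
    fun t ht => (hd2 t ht).continuousAt.continuousWithinAt
  -- continuity of W and V
  have htanc : ∀ c : ℝ, (∀ t ∈ Icc (-(D/2)) (D/2), 0 < Real.cos (c * t)) →
      ContinuousOn (fun t => Real.tan (c * t)) (Icc (-(D/2)) (D/2)) := by
    intro c hcpos
    simp only [Real.tan_eq_sin_div_cos]
    exact ((Real.continuous_sin.comp (continuous_const.mul continuous_id)).continuousOn).div
      ((Real.continuous_cos.comp (continuous_const.mul continuous_id)).continuousOn)
      (fun x hx => (hcpos x hx).ne')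
  have hsecc : ∀ c : ℝ, (∀ t ∈ Icc (-(D/2)) (D/2), 0 < Real.cos (c * t)) →
      ContinuousOn (fun t => 1 / Real.cos (c * t) ^ 2) (Icc (-(D/2)) (D/2)) := by
    intro c hcpos
    exact continuousOn_const.div
      (((Real.continuous_cos.comp (continuous_const.mul continuous_id)).continuousOn).pow 2)
      (fun x hx => pow_ne_zero 2 (hcpos x hx).ne')
  have hWeq : W = fun t => 2 * a * ((m : ℝ) - 1) * Real.sqrt κ₂ * Real.tan (Real.sqrt κ₂ * t)
      + 2 * b * Real.sqrt κ₁ * Real.tan (2 * Real.sqrt κ₁ * t) := funext hW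
  have hVeq : V = fun t => 2 * a * ((m : ℝ) - 1) * κ₂ * (1 / Real.cos (Real.sqrt κ₂ * t) ^ 2)
      + 4 * b * κ₁ * (1 / Real.cos (2 * Real.sqrt κ₁ * t) ^ 2) := funext hV
  have hWc : ContinuousOn W (Icc (-(D/2)) (D/2)) := by
    rw [hWeq]
    exact (continuousOn_const.mul (htanc _ hcos2)).add (continuousOn_const.mul (htanc _ hcos1))
  have hVc : ContinuousOn V (Icc (-(D/2)) (D/2)) := by
    rw [hVeq]
    exact (continuousOn_const.mul (hsecc _ hcos2)).add (continuousOn_const.mul (hsecc _ hcos1))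
  -- W' = V
  have hWd : ∀ t ∈ Icc (-(D/2)) (D/2), HasDerivAt W (V t) t := by
    intro t ht
    have hc2' := hcos2 t ht
    have hc1' := hcos1 t ht
    have d2 : HasDerivAt (fun t => Real.tan (Real.sqrt κ₂ * t))
        (1 / Real.cos (Real.sqrt κ₂ * t) ^ 2 * Real.sqrt κ₂) t :=
      (Real.hasDerivAt_tan hc2'.ne').comp t
        (by simpa using (hasDerivAt_id t).const_mul (Real.sqrt κ₂))
    have d1 : HasDerivAt (fun t => Real.tan (2 * Real.sqrt κ₁ * t))
        (1 / Real.cos (2 * Real.sqrt κ₁ * t) ^ 2 * (2 * Real.sqrt κ₁)) t :=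
      (Real.hasDerivAt_tan hc1'.ne').comp t
        (by simpa using (hasDerivAt_id t).const_mul (2 * Real.sqrt κ₁))
    have hsum := (d2.const_mul (2 * a * ((m : ℝ) - 1) * Real.sqrt κ₂)).add
      (d1.const_mul (2 * b * Real.sqrt κ₁))
    rw [hWeq]
    refine hsum.congr_deriv ?_
    symm
    rw [hV t]
    have e2 : Real.sqrt κ₂ * Real.sqrt κ₂ = κ₂ := Real.mul_self_sqrt hκ₂
    have e1 : Real.sqrt κ₁ * Real.sqrt κ₁ = κ₁ := Real.mul_self_sqrt hκ₁
    linear_combination (-(2 * (a:ℝ) * ((m:ℝ) - 1) * (1 / Real.cos (Real.sqrt κ₂ * t) ^ 2))) * e2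
      + (-(4 * (b:ℝ) * (1 / Real.cos (2 * Real.sqrt κ₁ * t) ^ 2))) * e1
  -- integrability helper
  have hii : ∀ f : ℝ → ℝ, ContinuousOn f (Icc (-(D/2)) (D/2)) →
      IntervalIntegrable f MeasureTheory.volume (-(D/2)) (D/2) := by
    intro f hf
    apply ContinuousOn.intervalIntegrable
    rwa [uIcc_of_le hAB.le]
  -- rpow derivative and continuity helpers
  have hdrp : ∀ p : ℝ, 1 ≤ p → ∀ t ∈ Icc (-(D/2)) (D/2),
      HasDerivAt (fun s => y s ^ p) (p * y t ^ (p - 1) * y' t) t :=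
    fun p hp t ht => (Real.hasDerivAt_rpow_const (Or.inr hp)).comp t (hd1 t ht)
  have hcrp : ∀ c : ℝ, 0 ≤ c → ContinuousOn (fun s => y s ^ c) (Icc (-(D/2)) (D/2)) := by
    intro c hc t ht
    exact (Real.continuousAt_rpow_const _ _ (Or.inr hc)).comp_continuousWithinAt (hyc t ht)
  -- the functions
  set z : ℝ → ℝ := fun s => y s ^ (γ - 1) with hzdef
  set w : ℝ → ℝ := fun s => y s ^ γ with hwdef
  set u : ℝ → ℝ := fun s => y s ^ (γ / 2) with hudef
  set z' : ℝ → ℝ := fun s => (γ - 1) * y s ^ (γ - 2) * y' s with hz'def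
  set w' : ℝ → ℝ := fun s => γ * y s ^ (γ - 1) * y' s with hw'def
  set u' : ℝ → ℝ := fun s => γ / 2 * y s ^ (γ / 2 - 1) * y' s with hu'def
  have hzd : ∀ t ∈ Icc (-(D/2)) (D/2), HasDerivAt z (z' t) t := by
    intro t ht
    have h := hdrp (γ - 1) (by linarith) t ht
    have he : γ - 1 - 1 = γ - 2 := by ring
    rw [he] at h
    exact h
  have hwd : ∀ t ∈ Icc (-(D/2)) (D/2), HasDerivAt w (w' t) t := by
    intro t ht
    have h := hdrp γ (by linarith) t ht
    exact h
  have hud : ∀ t ∈ Icc (-(D/2)) (D/2), HasDerivAt u (u' t) t := by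
    intro t ht
    have h := hdrp (γ / 2) (by linarith) t ht
    exact h
  have hzc : ContinuousOn z (Icc (-(D/2)) (D/2)) := hcrp _ (by linarith)
  have hwc : ContinuousOn w (Icc (-(D/2)) (D/2)) := hcrp _ (by linarith)
  have huc : ContinuousOn u (Icc (-(D/2)) (D/2)) := hcrp _ (by linarith)
  have hz'c : ContinuousOn z' (Icc (-(D/2)) (D/2)) :=
    (continuousOn_const.mul (hcrp _ (by linarith))).mul hy'c
  have hw'c : ContinuousOn w' (Icc (-(D/2)) (D/2)) :=
    (continuousOn_const.mul (hcrp _ (by linarith))).mul hy'c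
  have hu'c : ContinuousOn u' (Icc (-(D/2)) (D/2)) :=
    (continuousOn_const.mul (hcrp _ (by linarith))).mul hy'c
  -- boundary values
  have hzA : z (-(D/2)) = 0 := by
    simp only [hzdef, hbd₁]
    exact Real.zero_rpow (by linarith)
  have hzB : z (D/2) = 0 := by
    simp only [hzdef, hbd₂]
    exact Real.zero_rpow (by linarith)
  have hwA : w (-(D/2)) = 0 := by
    simp only [hwdef, hbd₁]
    exact Real.zero_rpow (by linarith)
  have hwB : w (D/2) = 0 := by
    simp only [hwdef, hbd₂]
    exact Real.zero_rpow (by linarith)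
  have huA : u (-(D/2)) = 0 := by
    simp only [hudef, hbd₁]
    exact Real.zero_rpow (by linarith)
  have huB : u (D/2) = 0 := by
    simp only [hudef, hbd₂]
    exact Real.zero_rpow (by linarith)
  -- pointwise identity : y * z = w
  have hyz : ∀ t ∈ Icc (-(D/2)) (D/2), y t * z t = w t := by
    intro t ht
    simp only [hzdef, hwdef]
    rcases (hnonneg t ht).eq_or_lt with h | h
    · rw [← h, Real.zero_rpow (by linarith : γ - 1 ≠ 0), Real.zero_rpow (by linarith : γ ≠ 0),
        mul_zero]
    · have h3 := Real.rpow_add h 1 (γ - 1)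
      rw [Real.rpow_one] at h3
      have h4 : (1:ℝ) + (γ - 1) = γ := by ring
      rw [h4] at h3
      exact h3.symm
  -- pointwise identity : u² = w
  have huw : ∀ t ∈ Icc (-(D/2)) (D/2), u t ^ 2 = w t := by
    intro t ht
    simp only [hudef, hwdef]
    rw [rpow_sq_helper (hnonneg t ht)]
    norm_num
  -- pointwise identity : z' * y' = (γ-1) * (4/γ²) * u'²
  have hz'y' : ∀ t ∈ Icc (-(D/2)) (D/2),
      z' t * y' t = (γ - 1) * (4 / γ ^ 2) * u' t ^ 2 := by
    intro t ht
    simp only [hz'def, hu'def]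
    rw [mul_pow, mul_pow, rpow_sq_helper (hnonneg t ht)]
    have he : (γ / 2 - 1) * 2 = γ - 2 := by ring
    rw [he]
    field_simp
    ring
  -- main integrals
  set K : ℝ := ∫ t in (-(D/2))..(D/2), V t * w t with hKdef
  set L : ℝ := ∫ t in (-(D/2))..(D/2), w t with hLdef
  have hL : 0 < L := by
    rw [hLdef]
    apply intervalIntegral_pos_of_pos_on (hii w hwc) _ hAB
    intro x hx
    exact Real.rpow_pos_of_pos (hpos x hx) γ
  -- IBP 1 : ∫ z y'' = - ∫ z' y'
  have hibp1 : ∫ t in (-(D/2))..(D/2), z t * y'' t = -∫ t in (-(D/2))..(D/2), z' t * y' t := by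
    have h := integral_mul_deriv_eq_deriv_mul
      (fun x hx => hzd x (by rwa [uIcc_of_le hAB.le] at hx))
      (fun x hx => hd2 x (by rwa [uIcc_of_le hAB.le] at hx))
      (hii z' hz'c) (hii y'' hc2)
    rw [hzA, hzB] at h
    simpa using h
  -- IBP 2 : ∫ W w' = - ∫ V w
  have hibp2 : ∫ t in (-(D/2))..(D/2), W t * w' t = -K := by
    have h := integral_mul_deriv_eq_deriv_mul
      (fun x hx => hWd x (by rwa [uIcc_of_le hAB.le] at hx))
      (fun x hx => hwd x (by rwa [uIcc_of_le hAB.le] at hx))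
      (hii V hVc) (hii w' hw'c)
    rw [hwA, hwB] at h
    simp only [mul_zero, sub_zero, zero_sub] at h
    rw [hKdef]
    rw [h]
  -- the ODE integrated against z
  have hode2 : ∫ t in (-(D/2))..(D/2), z t * y'' t
      = γ⁻¹ * (∫ t in (-(D/2))..(D/2), W t * w' t) + K - lam * L := by
    have hcong : ∫ t in (-(D/2))..(D/2), z t * y'' t
        = ∫ t in (-(D/2))..(D/2), (γ⁻¹ * (W t * w' t) + V t * w t - lam * w t) := by
      apply integral_congr
      intro t ht
      rw [uIcc_of_le hAB.le] at ht
      have hode := hODE t ht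
      have hy''  : y'' t = W t * y' t + V t * y t - lam * y t := by linarith
      have hyzt := hyz t ht
      simp only [hzdef, hwdef, hw'def] at hyzt ⊢
      rw [hy'']
      have hγinv : γ⁻¹ * γ = 1 := inv_mul_cancel₀ hγ0.ne'
      linear_combination (V t - lam) * hyzt - (W t * y t ^ (γ - 1) * y' t) * hγinv
    have hint1 : IntervalIntegrable (fun t => γ⁻¹ * (W t * w' t)) MeasureTheory.volume
        (-(D/2)) (D/2) := hii _ (continuousOn_const.mul (hWc.mul hw'c))
    have hint2 : IntervalIntegrable (fun t => V t * w t) MeasureTheory.volume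
        (-(D/2)) (D/2) := hii _ (hVc.mul hwc)
    have hint3 : IntervalIntegrable (fun t => lam * w t) MeasureTheory.volume
        (-(D/2)) (D/2) := (hii _ hwc).const_mul lam
    rw [hcong, integral_sub (hint1.add hint2) hint3, integral_add hint1 hint2,
      integral_const_mul, integral_const_mul, hKdef, hLdef]
  -- the key identity
  have hmain : lam * L = (∫ t in (-(D/2))..(D/2), z' t * y' t) + (1 - 1/γ) * K := by
    rw [hibp1, hibp2] at hode2
    have : (1:ℝ) - 1/γ = 1 - γ⁻¹ := by rw [one_div]
    rw [this]
    linarith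
  -- rewrite the first term via u'
  have hJ : ∫ t in (-(D/2))..(D/2), z' t * y' t
      = (γ - 1) * (4 / γ ^ 2) * ∫ t in (-(D/2))..(D/2), u' t ^ 2 := by
    rw [← integral_const_mul]
    apply integral_congr
    intro t ht
    rw [uIcc_of_le hAB.le] at ht
    exact hz'y' t ht
  -- Wirtinger
  have hwirt : (Real.pi / D) ^ 2 * ∫ t in (-(D/2))..(D/2), u t ^ 2
      ≤ ∫ t in (-(D/2))..(D/2), u' t ^ 2 :=
    wirtinger_aux hD u u' hud hu'c huA huB
  have hu2L : ∫ t in (-(D/2))..(D/2), u t ^ 2 = L := by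
    rw [hLdef]
    apply integral_congr
    intro t ht
    rw [uIcc_of_le hAB.le] at ht
    exact huw t ht
  rw [hu2L] at hwirt
  -- V ≥ V₀
  set V₀ : ℝ := 2 * a * ((m : ℝ) - 1) * κ₂ + 4 * b * κ₁ with hV₀def
  have hKV : V₀ * L ≤ K := by
    have h0 : 0 ≤ ∫ t in (-(D/2))..(D/2), (V t - V₀) * w t := by
      apply integral_nonneg hAB.le
      intro x hx
      apply mul_nonneg _ (Real.rpow_nonneg (hnonneg x hx) γ)
      have hcx2 := hcos2 x hx
      have hcx1 := hcos1 x hx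
      have hle2 : Real.cos (Real.sqrt κ₂ * x) ≤ 1 := Real.cos_le_one _
      have hle1 : Real.cos (2 * Real.sqrt κ₁ * x) ≤ 1 := Real.cos_le_one _
      have hs2 : (1:ℝ) ≤ 1 / Real.cos (Real.sqrt κ₂ * x) ^ 2 := by
        rw [le_div_iff₀ (by positivity)]
        nlinarith
      have hs1 : (1:ℝ) ≤ 1 / Real.cos (2 * Real.sqrt κ₁ * x) ^ 2 := by
        rw [le_div_iff₀ (by positivity)]
        nlinarith
      rw [hV x, hV₀def]
      have ha0 : (0:ℝ) ≤ (a:ℝ) := Nat.cast_nonneg a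
      have hb0 : (0:ℝ) ≤ (b:ℝ) := Nat.cast_nonneg b
      nlinarith [mul_nonneg (mul_nonneg (mul_nonneg (by linarith : (0:ℝ) ≤ 2 * (a:ℝ)) hm1) hκ₂) (by linarith [hs2] : (0:ℝ) ≤ 1 / Real.cos (Real.sqrt κ₂ * x) ^ 2 - 1),
        mul_nonneg (mul_nonneg (by linarith : (0:ℝ) ≤ 4 * (b:ℝ)) hκ₁) (by linarith [hs1] : (0:ℝ) ≤ 1 / Real.cos (2 * Real.sqrt κ₁ * x) ^ 2 - 1)]
    have hsplit : ∫ t in (-(D/2))..(D/2), (V t - V₀) * w t = K - V₀ * L := by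
      have : ∀ t ∈ uIcc (-(D/2)) (D/2), (V t - V₀) * w t = V t * w t - V₀ * w t := by
        intro t _; ring
      rw [integral_congr this, integral_sub (hii (fun t => V t * w t) (hVc.mul hwc))
        ((hii _ hwc).const_mul V₀ : IntervalIntegrable (fun t => V₀ * w t) MeasureTheory.volume (-(D/2)) (D/2)),
        integral_const_mul, hKdef, hLdef]
    rw [hsplit] at h0
    linarith
  -- assemble
  have hcoef : 0 ≤ (γ - 1) * (4 / γ ^ 2) := by
    apply mul_nonneg (by linarith)
    positivity
  have hcoef2 : 0 ≤ 1 - 1/γ := by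
    rw [sub_nonneg, div_le_one hγ0]
    linarith
  have hfinal : (4 * (γ - 1) / γ ^ 2 * (Real.pi ^ 2 / D ^ 2) + (1 - 1/γ) * V₀) * L ≤ lam * L := by
    rw [hmain, hJ]
    have h1 : (γ - 1) * (4 / γ ^ 2) * ((Real.pi / D) ^ 2 * L)
        ≤ (γ - 1) * (4 / γ ^ 2) * ∫ t in (-(D/2))..(D/2), u' t ^ 2 :=
      mul_le_mul_of_nonneg_left hwirt hcoef
    have h2 : (1 - 1/γ) * (V₀ * L) ≤ (1 - 1/γ) * K := mul_le_mul_of_nonneg_left hKV hcoef2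
    have he : (4 * (γ - 1) / γ ^ 2 * (Real.pi ^ 2 / D ^ 2) + (1 - 1/γ) * V₀) * L
        = (γ - 1) * (4 / γ ^ 2) * ((Real.pi / D) ^ 2 * L) + (1 - 1/γ) * (V₀ * L) := by
      field_simp
    rw [he]
    linarith
  have := (mul_le_mul_iff_of_pos_right hL).1 hfinal
  rw [hV₀def] at this
  exact this
end
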